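/- arXiv:1909.09217 — 5 statements merged into one kernel-verified Lean document; each statement's English description precedes it below -/
import Mathlib

section
/- Let n be a positive integer, A an integer, and a : {1,…,n} → ℤ with a(i) > 0 for all i and ∑_{i=1}^{n} a(i) = 2A. Then there exist h, v : {1,…,n} → {−1, 0, 1} with |h(i)| + |v(i)| ≤ 1 for all i, ∑_{i=1}^{n} h(i)·a(i) = A, and ∑_{i=1}^{n} v(i)·a(i) = A, if and only if there exists a subset S ⊆ {1,…,n} with ∑_{i∈S} a(i) = A. -/
/-- Correctness of the Partition-to-DPC reduction: the point `(A,A)` can be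
reached from `(0,0)` using each axis-aligned strut of length `a i` at most
once (with sign functions `h`, `v` for the horizontal and vertical
directions) iff the Partition instance `a` has a solution. -/
theorem stmt_3 (n : ℕ) (hn : 0 < n) (A : ℤ) (a : Fin n → ℤ)
    (ha : ∀ i, 0 < a i) (hsum : ∑ i, a i = 2 * A) :
    (∃ h v : Fin n → ℤ,
      (∀ i, h i = -1 ∨ h i = 0 ∨ h i = 1) ∧
      (∀ i, v i = -1 ∨ v i = 0 ∨ v i = 1) ∧
      (∀ i, |h i| + |v i| ≤ 1) ∧
      ∑ i, h i * a i = A ∧ ∑ i, v i * a i = A) ↔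
    (∃ S : Finset (Fin n), ∑ i ∈ S, a i = A) := by
  constructor
  · rintro ⟨h, v, hh, hv, hhv, hH, hV⟩
    -- each h i + v i ≤ 1
    have key : ∀ i, h i + v i ≤ 1 := by
      intro i
      have := hhv i
      have h1 : h i ≤ |h i| := le_abs_self _
      have h2 : v i ≤ |v i| := le_abs_self _
      linarith
    have hsum2 : ∑ i, (h i + v i) * a i = 2 * A := by
      simp only [add_mul, Finset.sum_add_distrib, hH, hV]; ring
    have hz : ∑ i, (1 - (h i + v i)) * a i = 0 := by
      simp only [sub_mul, one_mul, Finset.sum_sub_distrib, hsum2, hsum, sub_self]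
    have hone : ∀ i, h i + v i = 1 := by
      have := (Finset.sum_eq_zero_iff_of_nonneg (by
        intro i _
        have := key i
        have := (ha i).le
        nlinarith)).mp hz
      intro i
      have := this i (Finset.mem_univ i)
      have hai := (ha i).ne'
      have : 1 - (h i + v i) = 0 := by
        rcases mul_eq_zero.mp this with h' | h'
        · exact h'
        · exact absurd h' hai
      linarith
    -- so for each i, (h i, v i) = (1,0) or (0,1)
    have hcase : ∀ i, (h i = 1 ∧ v i = 0) ∨ (h i = 0 ∧ v i = 1) := by
      intro i
      have h1 := hone i
      have h2 := hhv i
      rcases hh i with e | e | e <;> rcases hv i with f | f | f <;>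
        simp [e, f] at h1 h2 ⊢ <;> omega
    refine ⟨Finset.univ.filter (fun i => h i = 1), ?_⟩
    calc ∑ i ∈ Finset.univ.filter (fun i => h i = 1), a i
        = ∑ i ∈ Finset.univ.filter (fun i => h i = 1), h i * a i := by
          refine Finset.sum_congr rfl fun i hi => ?_
          rw [(Finset.mem_filter.mp hi).2, one_mul]
      _ = ∑ i, h i * a i := by
          refine Finset.sum_subset (Finset.filter_subset _ _) fun i _ hi => ?_
          have : h i ≠ 1 := by
            intro e; exact hi (Finset.mem_filter.mpr ⟨Finset.mem_univ i, e⟩)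
          rcases hcase i with ⟨e, _⟩ | ⟨e, _⟩
          · exact absurd e this
          · rw [e, zero_mul]
      _ = A := hH
  · rintro ⟨S, hS⟩
    refine ⟨fun i => if i ∈ S then 1 else 0, fun i => if i ∈ S then 0 else 1,
      fun i => by by_cases hi : i ∈ S <;> simp [hi],
      fun i => by by_cases hi : i ∈ S <;> simp [hi],
      fun i => by by_cases hi : i ∈ S <;> simp [hi], ?_, ?_⟩
    · have h2 : ∑ i, (if i ∈ S then a i else 0) = A := by
        rw [Finset.sum_ite_mem, Finset.univ_inter, hS]
      exact (Finset.sum_congr rfl fun i _ => by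
        by_cases hi : i ∈ S <;> simp [hi]).trans h2
    · have h2 : ∑ i, (if i ∈ Sᶜ then a i else 0) = A := by
        rw [Finset.sum_ite_mem, Finset.univ_inter]
        rw [← Finset.sum_compl_add_sum S a, hS] at hsum
        linarith
      exact (Finset.sum_congr rfl fun i _ => by
        by_cases hi : i ∈ S <;> simp [hi]).trans h2
end

section
/- Let m, A be positive integers and a : {1,…,3m} → ℤ with 4·a(i) > A and 2·a(i) < A for all i and ∑_{i=1}^{3m} a(i) = m·A. Let π be a permutation of {1,…,3m}, let ε : {1,…,3m} → {−1,1}, let o : {1,…,3m} → {e₁, e₂}, and define steps v(i) := ε(i)·a(π(i))·o(i) ∈ ℤ². Let d : {1,…,m} → {e₁, −e₁, e₂, −e₂} and suppose there exist indices 0 = k₀ ≤ k₁ ≤ ⋯ ≤ k_m = 3m such that ∑_{k_{j−1} < i ≤ k_j} v(i) = A·d(j) for every j ∈ {1,…,m}. Then k_j = 3·j for all j, and for every j and every i with k_{j−1} < i ≤ k_j one has v(i) = a(π(i))·d(j); in particular, for each j the three values a(π(i)) with 3(j−1) < i ≤ 3j sum to A, so the sets I_j := {π(i) : 3(j−1)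 < i ≤ 3j} form a 3-Partition solution. -/
lemma card_filter_ico (n p q : ℕ) (hq : q ≤ n) :
    (Finset.univ.filter fun i : Fin n => p ≤ i.val ∧ i.val < q).card = q - p := by
  have h : (Finset.univ.filter fun i : Fin n => p ≤ i.val ∧ i.val < q)
      = (Finset.Ico p q).attachFin (fun x hx => lt_of_lt_of_le (Finset.mem_Ico.mp hx).2 hq) := by
    ext i
    simp [Finset.mem_attachFin, Finset.mem_Ico]
  rw [h, Finset.card_attachFin, Nat.card_Ico]

lemma key {ι : Type*} [DecidableEq ι] (S : Finset ι) (A : ℤ) (hA : 0 < A) (b c : ι → ℤ)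
    (hb4 : ∀ i ∈ S, A < 4 * b i) (hb2 : ∀ i ∈ S, 2 * b i < A)
    (hc : ∀ i ∈ S, c i = b i ∨ c i = -b i ∨ c i = 0)
    (hsum : ∑ i ∈ S, c i = A) :
    3 ≤ S.card ∧ (S.card = 3 → ∀ i ∈ S, c i = b i) := by
  have hb0 : ∀ i ∈ S, 0 < b i := fun i hi => by have := hb4 i hi; linarith
  have hcb : ∀ i ∈ S, c i ≤ b i := by
    intro i hi
    rcases hc i hi with h | h | h <;> have := hb0 i hi <;> omega
  have hne : S.Nonempty := by
    rcases S.eq_empty_or_nonempty with h | h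
    · rw [h] at hsum; simp at hsum; omega
    · exact h
  have hlt : ∑ i ∈ S, (2 * b i) < ∑ _i ∈ S, A :=
    Finset.sum_lt_sum_of_nonempty hne (fun i hi => hb2 i hi)
  have hsb : A ≤ ∑ i ∈ S, b i := hsum ▸ Finset.sum_le_sum hcb
  rw [Finset.sum_const] at hlt
  have h2b : 2 * ∑ i ∈ S, b i < (S.card : ℤ) * A := by
    rw [Finset.mul_sum]
    simpa [nsmul_eq_mul] using hlt
  have hcard3 : 3 ≤ S.card := by
    by_contra h
    push_neg at h
    interval_cases hcc : S.card <;> simp_all <;> nlinarith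
  refine ⟨hcard3, fun h3 i hi => ?_⟩
  by_contra hne'
  have hci : c i ≤ 0 := by
    rcases hc i hi with h | h | h
    · exact absurd h hne'
    · have := hb0 i hi; omega
    · omega
  have herase : ∑ j ∈ S.erase i, c j = A - c i := by
    have := Finset.add_sum_erase S c hi
    omega
  have hcb2 : A - c i ≤ ∑ j ∈ S.erase i, b j :=
    herase ▸ Finset.sum_le_sum (fun j hj => hcb j (Finset.mem_of_mem_erase hj))
  have hne2 : (S.erase i).Nonempty := by
    rw [← Finset.card_pos, Finset.card_erase_of_mem hi, h3]
    norm_num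
  have hlt2 : ∑ j ∈ S.erase i, (2 * b j) < ∑ _j ∈ S.erase i, A :=
    Finset.sum_lt_sum_of_nonempty hne2 (fun j hj => hb2 j (Finset.mem_of_mem_erase hj))
  rw [Finset.sum_const, Finset.card_erase_of_mem hi, h3] at hlt2
  have : (2 : ℤ) * ∑ j ∈ S.erase i, b j < 2 * A := by
    rw [Finset.mul_sum]
    simpa [nsmul_eq_mul] using hlt2
  linarith

/-- Core rigidity of the DPA-S hardness proof: if an axis-aligned path whose
steps are `v i = ε i · a (π i) · o i` (each strut length used exactly once,
orientation `o i ∈ {e₁, e₂}`, sign `ε i ∈ {±1}`) decomposes into `m`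
consecutive blocks, delimited by `0 = k₀ ≤ k₁ ≤ ⋯ ≤ k_m = 3m`, whose net
displacements are `A • d j` with `d j ∈ {±e₁, ±e₂}`, then `k j = 3j`, every
step in block `j` equals `a (π i) • d j`, and the index images `I j` of the
blocks under `π` form a 3-Partition solution. (Steps are indexed 0-based:
block `j` consists of indices `i` with `k j ≤ i < k (j+1)`.) -/
theorem stmt_4 (m : ℕ) (hm : 0 < m) (A : ℤ) (hA : 0 < A)
    (a : Fin (3 * m) → ℤ)
    (h4 : ∀ i, 4 * a i > A) (h2 : ∀ i, 2 * a i < A)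
    (hsum : ∑ i, a i = (m : ℤ) * A)
    (π : Equiv.Perm (Fin (3 * m)))
    (ε : Fin (3 * m) → ℤ) (hε : ∀ i, ε i = 1 ∨ ε i = -1)
    (o : Fin (3 * m) → ℤ × ℤ) (ho : ∀ i, o i = (1, 0) ∨ o i = (0, 1))
    (v : Fin (3 * m) → ℤ × ℤ) (hv : ∀ i, v i = (ε i * a (π i)) • o i)
    (d : Fin m → ℤ × ℤ)
    (hd : ∀ j, d j = (1, 0) ∨ d j = (-1, 0) ∨ d j = (0, 1) ∨ d j = (0, -1))
    (k : Fin (m + 1) → ℕ) (hk0 : k 0 = 0) (hmono : Monotone k)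
    (hkm : k (Fin.last m) = 3 * m)
    (hblock : ∀ j : Fin m,
      ∑ i ∈ Finset.univ.filter
          (fun i : Fin (3 * m) => k j.castSucc ≤ (i : ℕ) ∧ (i : ℕ) < k j.succ), v i
        = A • d j) :
    (∀ j : Fin (m + 1), k j = 3 * (j : ℕ)) ∧
    (∀ j : Fin m, ∀ i : Fin (3 * m),
      k j.castSucc ≤ (i : ℕ) → (i : ℕ) < k j.succ → v i = a (π i) • d j) ∧
    (∀ I : Fin m → Finset (Fin (3 * m)),
      (∀ j, I j = (Finset.univ.filter
          (fun i : Fin (3 * m) => 3 * (j : ℕ) ≤ (i : ℕ) ∧ (i : ℕ) < 3 * (j : ℕ) + 3)).image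
            (fun i => π i)) →
      (∀ j, (I j).card = 3 ∧ ∑ l ∈ I j, a l = A) ∧
      (∀ j j', j ≠ j' → Disjoint (I j) (I j')) ∧
      Finset.univ.biUnion I = Finset.univ) := by
  have ha : ∀ i, 0 < a i := fun i => by have := h4 i; linarith
  set S : Fin m → Finset (Fin (3 * m)) :=
    fun j => Finset.univ.filter (fun i : Fin (3 * m) => k j.castSucc ≤ (i : ℕ) ∧ (i : ℕ) < k j.succ)
    with hSdef
  set c : Fin m → Fin (3 * m) → ℤ :=
    fun j i => (v i).1 * (d j).1 + (v i).2 * (d j).2 with hcdef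
  -- values of c
  have hcval : ∀ j i, c j i = a (π i) ∨ c j i = -(a (π i)) ∨ c j i = 0 := by
    intro j i
    rcases hε i with h1 | h1 <;> rcases ho i with h2 | h2 <;> rcases hd j with h3 | h3 | h3 | h3 <;>
      simp [hcdef, hv i, h1, h2, h3, Prod.smul_def, smul_eq_mul] <;> tauto
  -- block sums of c
  have hsumc : ∀ j, ∑ i ∈ S j, c j i = A := by
    intro j
    have hb := hblock j
    have hsplit : ∑ i ∈ S j, c j i
        = (∑ i ∈ S j, (v i).1) * (d j).1 + (∑ i ∈ S j, (v i).2) * (d j).2 := by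
      rw [Finset.sum_mul, Finset.sum_mul, ← Finset.sum_add_distrib]
    have h1 : ∑ i ∈ S j, (v i).1 = A * (d j).1 := by
      rw [← Prod.fst_sum, hb]; simp [Prod.smul_def, smul_eq_mul]
    have h2' : ∑ i ∈ S j, (v i).2 = A * (d j).2 := by
      rw [← Prod.snd_sum, hb]; simp [Prod.smul_def, smul_eq_mul]
    rw [hsplit, h1, h2']
    rcases hd j with h3 | h3 | h3 | h3 <;> simp [h3] <;> ring
  -- key facts per block
  have hkey : ∀ j : Fin m, 3 ≤ (S j).card ∧ ((S j).card = 3 → ∀ i ∈ S j, c j i = a (π i)) := by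
    intro j
    exact key (S j) A hA (fun i => a (π i)) (c j)
      (fun i _ => h4 (π i)) (fun i _ => h2 (π i)) (fun i _ => hcval j i) (hsumc j)
  -- cardinality of blocks
  have hks : ∀ j : Fin m, k j.succ ≤ 3 * m := fun j => hkm ▸ hmono (Fin.le_last j.succ)
  have hkcard : ∀ j : Fin m, (S j).card = k j.succ - k j.castSucc :=
    fun j => card_filter_ico (3 * m) (k j.castSucc) (k j.succ) (hks j)
  have hstep : ∀ j : Fin m, k j.castSucc + 3 ≤ k j.succ := by
    intro j
    have h1 := (hkey j).1
    have h2' := hkcard j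
    have h3 := hmono (Fin.castSucc_le_succ j)
    omega
  -- k j = 3 j
  have hklow : ∀ n, (hn : n ≤ m) → 3 * n ≤ k ⟨n, Nat.lt_succ_of_le hn⟩ := by
    intro n
    induction n with
    | zero =>
      intro hn
      have e : (⟨0, Nat.lt_succ_of_le hn⟩ : Fin (m + 1)) = 0 := rfl
      rw [e, hk0]
    | succ n ih =>
      intro hn
      have hn' : n < m := hn
      have hs := hstep ⟨n, hn'⟩
      have e1 : (⟨n, hn'⟩ : Fin m).castSucc = ⟨n, Nat.lt_succ_of_le (Nat.le_of_lt hn')⟩ := rfl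
      have e2 : (⟨n, hn'⟩ : Fin m).succ = ⟨n + 1, Nat.lt_succ_of_le hn⟩ := rfl
      rw [e1, e2] at hs
      have := ih (Nat.le_of_lt hn')
      omega
  have hkhigh : ∀ n, (hn : n ≤ m) → k ⟨m - n, Nat.lt_succ_of_le (Nat.sub_le m n)⟩ + 3 * n ≤ 3 * m := by
    intro n
    induction n with
    | zero =>
      intro hn
      have e : (⟨m - 0, Nat.lt_succ_of_le (Nat.sub_le m 0)⟩ : Fin (m + 1)) = Fin.last m := by
        ext; simp
      rw [e, hkm]
      omega
    | succ n ih =>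
      intro hn
      have hlt : m - (n + 1) < m := by omega
      have hs := hstep ⟨m - (n + 1), hlt⟩
      have e1 : (⟨m - (n + 1), hlt⟩ : Fin m).castSucc
          = ⟨m - (n + 1), Nat.lt_succ_of_le (Nat.sub_le m (n + 1))⟩ := rfl
      have e2 : (⟨m - (n + 1), hlt⟩ : Fin m).succ
          = ⟨m - n, Nat.lt_succ_of_le (Nat.sub_le m n)⟩ := by
        ext; simp; omega
      rw [e1, e2] at hs
      have := ih (Nat.le_of_lt hn)
      omega
  have hk : ∀ j : Fin (m + 1), k j = 3 * (j : ℕ) := by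
    intro j
    have hjm : (j : ℕ) ≤ m := Nat.lt_succ_iff.mp j.isLt
    have hlow := hklow (j : ℕ) hjm
    have hhigh := hkhigh (m - (j : ℕ)) (Nat.sub_le m (j : ℕ))
    have e1 : (⟨(j : ℕ), Nat.lt_succ_of_le hjm⟩ : Fin (m + 1)) = j := by ext; rfl
    have e2 : (⟨m - (m - (j : ℕ)), Nat.lt_succ_of_le (Nat.sub_le m (m - (j : ℕ)))⟩ : Fin (m + 1)) = j := by
      ext; simp; omega
    rw [e1] at hlow
    rw [e2] at hhigh
    omega
  -- each block has exactly 3 elements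
  have hScard : ∀ j : Fin m, (S j).card = 3 := by
    intro j
    rw [hkcard j, hk j.succ, hk j.castSucc, Fin.val_succ, Fin.coe_castSucc]
    omega
  have hceq : ∀ j : Fin m, ∀ i ∈ S j, c j i = a (π i) := fun j => (hkey j).2 (hScard j)
  -- per-step conclusion
  have hstepv : ∀ j : Fin m, ∀ i ∈ S j, v i = a (π i) • d j := by
    intro j i hi
    have hc := hceq j i hi
    have hai := ha (π i)
    rcases hε i with h1 | h1 <;> rcases ho i with h2 | h2 <;> rcases hd j with h3 | h3 | h3 | h3 <;>
      simp [hcdef, hv i, h1, h2, h3, Prod.smul_def, smul_eq_mul, Prod.ext_iff] at hc ⊢ <;> omega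
  refine ⟨hk, ?_, ?_⟩
  · intro j i hi1 hi2
    exact hstepv j i (by simp [hSdef, hi1, hi2])
  · intro I hI
    have hSj : ∀ j : Fin m, S j
        = Finset.univ.filter (fun i : Fin (3 * m) => 3 * (j : ℕ) ≤ (i : ℕ) ∧ (i : ℕ) < 3 * (j : ℕ) + 3) := by
      intro j
      have e1 : k j.castSucc = 3 * (j : ℕ) := by rw [hk j.castSucc, Fin.coe_castSucc]
      have e2 : k j.succ = 3 * (j : ℕ) + 3 := by rw [hk j.succ, Fin.val_succ]; ring
      ext i
      simp [hSdef, e1, e2]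
    have hIj : ∀ j, I j = (S j).image (fun i => π i) := by
      intro j
      rw [hI j, hSj j]
    refine ⟨?_, ?_, ?_⟩
    · intro j
      constructor
      · rw [hIj j, Finset.card_image_of_injective _ π.injective, hScard j]
      · rw [hIj j, Finset.sum_image (fun x _ y _ h => π.injective h)]
        calc ∑ i ∈ S j, a (π i) = ∑ i ∈ S j, c j i :=
              Finset.sum_congr rfl (fun i hi => (hceq j i hi).symm)
          _ = A := hsumc j
    · intro j j' hjj
      rw [hIj j, hIj j']
      rw [Finset.disjoint_image π.injective]
      rw [Finset.disjoint_left]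
      intro x hx hx'
      rw [hSj j] at hx
      rw [hSj j'] at hx'
      simp only [Finset.mem_filter, Finset.mem_univ, true_and] at hx hx'
      have : (j : ℕ) ≠ (j' : ℕ) := fun h => hjj (Fin.ext h)
      omega
    · ext x
      simp only [Finset.mem_biUnion, Finset.mem_univ, iff_true, true_and]
      have hxv : (π.symm x : ℕ) < 3 * m := (π.symm x).isLt
      refine ⟨⟨(π.symm x : ℕ) / 3, by omega⟩, ?_⟩
      rw [hI]
      rw [Finset.mem_image]
      refine ⟨π.symm x, ?_, π.apply_symm_apply x⟩
      simp only [Finset.mem_filter, Finset.mem_univ, true_and]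
      exact ⟨by omega, by omega⟩
end

section
/- Let m, A be positive integers and a : {1,…,3m} → ℤ with 4·a(i) > A and 2·a(i) < A for all i and ∑_{i=1}^{3m} a(i) = m·A. Let δ be a real number with 0 ≤ δ < 1/2 and set p_j := (⌊j/2⌋·A, (⌈j/2⌉ mod 2)·A) ∈ ℤ² for j = 0,…,m. The following are equivalent: (i) there exist a start point x ∈ ℝ², a permutation π of {1,…,3m}, signs ε : {1,…,3m} → {−1,1}, orientations o : {1,…,3m} → {e₁, e₂}, and indices 0 = k₀ ≤ k₁ ≤ ⋯ ≤ k_m = 3m such that, with steps v(i) := ε(i)·a(π(i))·o(i), one has ‖(x + ∑_{1 ≤ i ≤ k_j} v(i)) − p_j‖_∞ ≤ δ for every j ∈ {0,…,m}; (ii) {1,…,3m} can be partitioned into m three-element sets each with a-sum A. -/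
set_option linter.unusedSectionVars false
set_option linter.unusedVariables false
set_option maxHeartbeats 1000000


/-- Coercion of an integer point to the real plane (with the `ℓ∞` product norm). -/
noncomputable def toR : ℤ × ℤ → ℝ × ℝ := fun p => ((p.1 : ℝ), (p.2 : ℝ))

lemma toR_zero : toR 0 = 0 := by simp [toR, Prod.ext_iff]

lemma toR_sub (u v : ℤ × ℤ) : toR (u - v) = toR u - toR v := by
  simp [toR, Prod.ext_iff]

lemma toR_eq_zero_of_norm_lt_one {w : ℤ × ℤ} (h : ‖toR w‖ < 1) : w = 0 := by
  simp only [toR, Prod.norm_def, Real.norm_eq_abs, max_lt_iff] at h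
  obtain ⟨h1, h2⟩ := h
  have e1 : |w.1| < 1 := by exact_mod_cast (by push_cast; exact h1 : ((|w.1| : ℤ) : ℝ) < 1)
  have e2 : |w.2| < 1 := by exact_mod_cast (by push_cast; exact h2 : ((|w.2| : ℤ) : ℝ) < 1)
  rw [abs_lt] at e1 e2
  simp only [Prod.ext_iff, Prod.fst_zero, Prod.snd_zero]
  omega



section core
variable {ι : Type*} [DecidableEq ι]

lemma core_card_ge (T : Finset ι) (b : ι → ℤ) (A : ℤ) (hA : 0 < A)
    (hb : ∀ i ∈ T, A < 4 * |b i| ∧ 2 * |b i| < A)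
    (h : |∑ i ∈ T, b i| = A) : 3 ≤ T.card := by
  have habs : |∑ i ∈ T, b i| ≤ ∑ i ∈ T, |b i| := Finset.abs_sum_le_sum_abs _ _
  have hAS : A ≤ ∑ i ∈ T, |b i| := h ▸ habs
  have hle : ∑ i ∈ T, (2 * |b i|) ≤ ∑ _i ∈ T, (A - 1) :=
    Finset.sum_le_sum (fun i hi => by have := (hb i hi).2; omega)
  rw [← Finset.mul_sum, Finset.sum_const, nsmul_eq_mul] at hle
  by_contra hc
  push_neg at hc
  interval_cases hcard : T.card <;> simp_all <;> omega

lemma core_card_zero (T : Finset ι) (b : ι → ℤ) (A : ℤ) (hA : 0 < A)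
    (hb : ∀ i ∈ T, A < 4 * |b i| ∧ 2 * |b i| < A)
    (h : ∑ i ∈ T, b i = 0) : T = ∅ ∨ 2 ≤ T.card := by
  rcases Finset.eq_empty_or_nonempty T with he | ⟨i0, hi0⟩
  · exact Or.inl he
  right
  by_contra hc
  push_neg at hc
  have : T = {i0} := by
    apply Finset.eq_singleton_iff_unique_mem.2
    refine ⟨hi0, fun x hx => ?_⟩
    by_contra hne
    have : 2 ≤ T.card := Finset.one_lt_card.2 ⟨x, hx, i0, hi0, hne⟩
    omega
  rw [this, Finset.sum_singleton] at h
  have := (hb i0 hi0).1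
  rw [h] at this
  simp at this
  omega

lemma core_all_pos (T : Finset ι) (b : ι → ℤ) (A : ℤ) (hA : 0 < A)
    (hb : ∀ i ∈ T, A < 4 * |b i| ∧ 2 * |b i| < A)
    (hcard : T.card = 3) (hs : ∑ i ∈ T, b i = A) :
    ∀ i ∈ T, 0 < b i := by
  intro i hi
  by_contra hneg
  push_neg at hneg
  have h4 : 4 * b i ≤ -(A + 1) := by
    have := (hb i hi).1
    rcases abs_cases (b i) with ⟨he, _⟩ | ⟨he, _⟩ <;> omega
  have hrest : ∑ j ∈ T.erase i, b j = A - b i := by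
    have := Finset.add_sum_erase T b hi
    omega
  have habs : |∑ j ∈ T.erase i, b j| ≤ ∑ j ∈ T.erase i, |b j| := Finset.abs_sum_le_sum_abs _ _
  have hle : ∑ j ∈ T.erase i, (2 * |b j|) ≤ ∑ _j ∈ T.erase i, (A - 1) :=
    Finset.sum_le_sum (fun j hj => by have := (hb j (Finset.mem_of_mem_erase hj)).2; omega)
  rw [← Finset.mul_sum, Finset.sum_const, nsmul_eq_mul] at hle
  have hce : (T.erase i).card = 2 := by rw [Finset.card_erase_of_mem hi]; omega
  rw [hce] at hle
  have h1 : A - b i ≤ ∑ j ∈ T.erase i, |b j| := by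
    rw [← hrest]; exact (le_abs_self _).trans habs
  push_cast at hle
  omega

lemma core_sum_abs (T : Finset ι) (b : ι → ℤ) (A : ℤ) (hA : 0 < A)
    (hb : ∀ i ∈ T, A < 4 * |b i| ∧ 2 * |b i| < A)
    (hcard : T.card = 3) (hs : |∑ i ∈ T, b i| = A) :
    (∑ i ∈ T, |b i| = A) ∧ ((∀ i ∈ T, 0 < b i) ∨ (∀ i ∈ T, b i < 0)) := by
  rcases abs_cases (∑ i ∈ T, b i) with ⟨he, _⟩ | ⟨he, _⟩
  · have hpos := core_all_pos T b A hA hb hcard (by omega)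
    refine ⟨?_, Or.inl hpos⟩
    have heq : ∑ i ∈ T, |b i| = ∑ i ∈ T, b i :=
      Finset.sum_congr rfl (fun i hi => abs_of_pos (hpos i hi))
    omega
  · have hneg' : ∑ i ∈ T, (-(b i)) = A := by
      rw [Finset.sum_neg_distrib]; omega
    have hpos := core_all_pos T (fun i => -(b i)) A hA
      (fun i hi => by simpa using hb i hi) hcard hneg'
    have hneg : ∀ i ∈ T, b i < 0 := fun i hi => by have := hpos i hi; simp at this; omega
    refine ⟨?_, Or.inr hneg⟩
    have heq : ∑ i ∈ T, |b i| = ∑ i ∈ T, (-(b i)) :=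
      Finset.sum_congr rfl (fun i hi => abs_of_neg (hneg i hi))
    omega
end core


lemma dir_lemma (A : ℤ) (p : ℕ → ℤ × ℤ)
    (hp : ∀ j, p j = (((j / 2 : ℕ) : ℤ) * A, (((j + 1) / 2 % 2 : ℕ) : ℤ) * A)) (j : ℕ) :
    ((p (j+1) - p j).1 = 0 ∧ ((p (j+1) - p j).2 = A ∨ (p (j+1) - p j).2 = -A)) ∨
    ((p (j+1) - p j).1 = A ∧ (p (j+1) - p j).2 = 0) := by
  rw [hp (j+1), hp j]
  simp only [Prod.fst_sub, Prod.snd_sub]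
  have key : ((j+1)/2 = j/2 ∧ ((j+2)/2 % 2 = (j+1)/2 % 2 + 1 ∨ (j+1)/2 % 2 = (j+2)/2 % 2 + 1)) ∨
      ((j+1)/2 = j/2 + 1 ∧ (j+2)/2 % 2 = (j+1)/2 % 2) := by omega
  rcases key with ⟨h1, h2 | h2⟩ | ⟨h1, h2⟩
  · left
    constructor
    · rw [h1]; ring
    · left; rw [show (j+1+1) = j+2 from rfl, h2]; push_cast; ring
  · left
    constructor
    · rw [h1]; ring
    · right; rw [show (j+1+1) = j+2 from rfl, h2]; push_cast; ring
  · right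
    constructor
    · rw [h1]; push_cast; ring
    · rw [show (j+1+1) = j+2 from rfl, h2]; ring

lemma card_window (n a b : ℕ) (hb : b ≤ n) :
    (Finset.univ.filter (fun i : Fin n => a ≤ (i : ℕ) ∧ (i : ℕ) < b)).card = b - a := by
  rw [← Nat.card_Ico a b]
  apply Finset.card_bij (fun (i : Fin n) _ => (i : ℕ))
  · intro i hi
    simp only [Finset.mem_filter] at hi
    exact Finset.mem_Ico.2 hi.2
  · intro i _ j _ h
    exact Fin.val_injective h
  · intro x hx
    rw [Finset.mem_Ico] at hx
    exact ⟨⟨x, lt_of_lt_of_le hx.2 hb⟩, by simp [hx.1, hx.2], rfl⟩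


lemma tele_sum : ∀ (m : ℕ) (g : Fin (m+1) → ℕ), Monotone g →
    ∑ j : Fin m, (g j.succ - g j.castSucc) = g (Fin.last m) - g 0 := by
  intro m
  induction m with
  | zero => intro g _; simp [Fin.last]
  | succ n ih =>
    intro g hg
    rw [Fin.sum_univ_castSucc]
    have h1 : ∑ j : Fin n, (g (Fin.castSucc j).succ - g (Fin.castSucc j).castSucc)
        = ∑ j : Fin n, ((g ∘ Fin.castSucc) j.succ - (g ∘ Fin.castSucc) j.castSucc) := by
      apply Finset.sum_congr rfl
      intro j _
      simp only [Function.comp, Fin.succ_castSucc]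
    rw [h1, ih (g ∘ Fin.castSucc) (hg.comp (fun _ _ h => Fin.castSucc_le_castSucc_iff.2 h))]
    have e2 : (g ∘ Fin.castSucc) 0 = g 0 := by simp [Function.comp]
    have h2 : g 0 ≤ g (Fin.castSucc (Fin.last n)) := hg (Fin.zero_le _)
    have h3 : g (Fin.castSucc (Fin.last n)) ≤ g (Fin.last n).succ := hg Fin.castSucc_lt_succ.le
    have h4 : (Fin.last n).succ = Fin.last (n+1) := rfl
    simp only [Function.comp] at *
    rw [h4] at h3 ⊢
    have h5 : g (Fin.last (n+1)) ≥ g (Fin.castSucc (Fin.last n)) := h3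
    omega

theorem fwd (m : ℕ) (hm : 0 < m) (A : ℤ) (hA : 0 < A)
    (a : Fin (3 * m) → ℤ)
    (h4 : ∀ i, 4 * a i > A) (h2 : ∀ i, 2 * a i < A)
    (hsum : ∑ i, a i = (m : ℤ) * A)
    (δ : ℝ) (hδ0 : 0 ≤ δ) (hδ : δ < 1 / 2)
    (p : ℕ → ℤ × ℤ)
    (hp : ∀ j, p j = (((j / 2 : ℕ) : ℤ) * A, (((j + 1) / 2 % 2 : ℕ) : ℤ) * A))
    (x : ℝ × ℝ) (π : Equiv.Perm (Fin (3 * m))) (ε : Fin (3 * m) → ℤ)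
    (o : Fin (3 * m) → ℤ × ℤ) (k : Fin (m + 1) → ℕ)
    (hε : ∀ i, ε i = 1 ∨ ε i = -1)
    (ho : ∀ i, o i = (1, 0) ∨ o i = (0, 1))
    (hk : Monotone k) (hk0 : k 0 = 0) (hkm : k (Fin.last m) = 3 * m)
    (hbox : ∀ j : Fin (m + 1),
        ‖x + toR (∑ i ∈ Finset.univ.filter (fun i : Fin (3 * m) => (i : ℕ) < k j),
            (ε i * a (π i)) • o i) - toR (p (j : ℕ))‖ ≤ δ) :
    (∃ P : Finpartition (Finset.univ : Finset (Fin (3 * m))),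
      P.parts.card = m ∧ ∀ q ∈ P.parts, q.card = 3 ∧ ∑ i ∈ q, a i = A) := by
  classical
  set S : ℕ → ℤ × ℤ :=
    fun t => ∑ i ∈ Finset.univ.filter (fun i : Fin (3 * m) => (i : ℕ) < t),
      (ε i * a (π i)) • o i with hS_def
  have hbox' : ∀ j : Fin (m + 1), ‖x + toR (S (k j)) - toR (p (j : ℕ))‖ ≤ δ := hbox
  have hp00 : p 0 = 0 := by rw [hp 0]; simp [Prod.ext_iff]
  have hS0 : S 0 = 0 := by
    rw [hS_def]
    simp
  have b0 : ‖x‖ ≤ δ := by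
    have := hbox' 0
    rw [Fin.val_zero, hk0, hS0, toR_zero, hp00, toR_zero] at this
    simpa using this
  -- Step 1: partial sums hit the sample points exactly
  have hSk : ∀ j : Fin (m + 1), S (k j) = p (j : ℕ) := by
    intro j
    have bj := hbox' j
    have heq : toR (S (k j) - p (j : ℕ)) = (x + toR (S (k j)) - toR (p (j : ℕ))) - x := by
      rw [toR_sub]; abel
    have hlt : ‖toR (S (k j) - p (j : ℕ))‖ < 1 := by
      rw [heq]
      calc ‖(x + toR (S (k j)) - toR (p (j : ℕ))) - x‖
          ≤ ‖x + toR (S (k j)) - toR (p (j : ℕ))‖ + ‖x‖ := norm_sub_le _ _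
        _ ≤ δ + δ := add_le_add bj b0
        _ < 1 := by linarith
    have := toR_eq_zero_of_norm_lt_one hlt
    exact sub_eq_zero.1 this
  -- segments
  set T : Fin m → Finset (Fin (3 * m)) :=
    fun j => Finset.univ.filter
      (fun i => k j.castSucc ≤ (i : ℕ) ∧ (i : ℕ) < k j.succ) with hT_def
  have hseg : ∀ j : Fin m,
      ∑ i ∈ T j, (ε i * a (π i)) • o i = p ((j : ℕ) + 1) - p (j : ℕ) := by
    intro j
    have hmono : k j.castSucc ≤ k j.succ := hk (j.castSucc_le_succ)
    have hunion : Finset.univ.filter (fun i : Fin (3 * m) => (i : ℕ) < k j.succ)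
        = Finset.univ.filter (fun i : Fin (3 * m) => (i : ℕ) < k j.castSucc) ∪ T j := by
      ext i
      simp only [hT_def, Finset.mem_union, Finset.mem_filter, Finset.mem_univ, true_and]
      omega
    have hdisj : Disjoint
        (Finset.univ.filter (fun i : Fin (3 * m) => (i : ℕ) < k j.castSucc)) (T j) := by
      rw [Finset.disjoint_left]
      intro i h1 h2
      simp only [hT_def, Finset.mem_filter, Finset.mem_univ, true_and] at h1 h2
      omega
    have hsplit : S (k j.succ) = S (k j.castSucc) + ∑ i ∈ T j, (ε i * a (π i)) • o i := by
      rw [hS_def]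
      simp only
      rw [hunion, Finset.sum_union hdisj]
    have e1 := hSk j.succ
    have e2 := hSk j.castSucc
    rw [Fin.val_succ] at e1
    rw [Fin.coe_castSucc] at e2
    rw [e1, e2] at hsplit
    rw [eq_comm] at hsplit
    exact eq_sub_of_add_eq' hsplit

  -- step values
  have hapos : ∀ i, 0 < a i := fun i => by have := h4 i; omega
  set b : Fin (3 * m) → ℤ := fun i => ε i * a (π i) with hb_def
  have habs : ∀ i, |b i| = a (π i) := by
    intro i
    rcases hε i with h | h
    · simp [hb_def, h, abs_of_pos (hapos (π i))]
    · simp [hb_def, h, abs_of_pos (hapos (π i))]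
  have hbb : ∀ (U : Finset (Fin (3 * m))), ∀ i ∈ U, A < 4 * |b i| ∧ 2 * |b i| < A := by
    intro U i _
    rw [habs i]
    exact ⟨h4 (π i), h2 (π i)⟩
  have hcoord : ∀ (U : Finset (Fin (3 * m))),
      (∑ i ∈ U, (ε i * a (π i)) • o i).1
        = ∑ i ∈ U.filter (fun i => o i = ((1 : ℤ), (0 : ℤ))), b i ∧
      (∑ i ∈ U, (ε i * a (π i)) • o i).2
        = ∑ i ∈ U.filter (fun i => o i = ((0 : ℤ), (1 : ℤ))), b i := by
    intro U
    constructor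
    · rw [Finset.sum_filter, Prod.fst_sum]
      apply Finset.sum_congr rfl
      intro i _
      rcases ho i with h | h <;> simp [h, hb_def]
    · rw [Finset.sum_filter, Prod.snd_sum]
      apply Finset.sum_congr rfl
      intro i _
      rcases ho i with h | h <;> simp [h, hb_def]
  -- per-segment analysis
  have key : ∀ j : Fin m, 3 ≤ (T j).card ∧ ((T j).card = 3 → ∑ i ∈ T j, a (π i) = A) := by
    intro j
    set T1 := (T j).filter (fun i => o i = ((1 : ℤ), (0 : ℤ))) with hT1
    set T2 := (T j).filter (fun i => o i = ((0 : ℤ), (1 : ℤ))) with hT2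
    have hT2' : T2 = (T j).filter (fun i => ¬(o i = ((1 : ℤ), (0 : ℤ)))) := by
      apply Finset.filter_congr
      intro i _
      rcases ho i with h | h <;> simp [h]
    have hcards : T1.card + T2.card = (T j).card := by
      rw [hT1, hT2']
      exact Finset.card_filter_add_card_filter_not _
    have hc1 : (p ((j : ℕ) + 1) - p (j : ℕ)).1 = ∑ i ∈ T1, b i := by
      rw [← hseg j]; exact (hcoord (T j)).1
    have hc2 : (p ((j : ℕ) + 1) - p (j : ℕ)).2 = ∑ i ∈ T2, b i := by
      rw [← hseg j]; exact (hcoord (T j)).2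
    have hsub1 : T1 ⊆ T j := Finset.filter_subset _ _
    have hsub2 : T2 ⊆ T j := Finset.filter_subset _ _
    have hbb1 : ∀ i ∈ T1, A < 4 * |b i| ∧ 2 * |b i| < A := hbb T1
    have hbb2 : ∀ i ∈ T2, A < 4 * |b i| ∧ 2 * |b i| < A := hbb T2
    rcases dir_lemma A p hp (j : ℕ) with ⟨hd1, hd2⟩ | ⟨hd1, hd2⟩
    · -- vertical segment: main direction is T2
      have hm2 : |∑ i ∈ T2, b i| = A := by
        rw [← hc2]
        rcases hd2 with h | h <;> rw [h]
        · exact abs_of_pos hA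
        · rw [abs_neg]; exact abs_of_pos hA
      have hz1 : ∑ i ∈ T1, b i = 0 := by rw [← hc1, hd1]
      have hge2 : 3 ≤ T2.card := core_card_ge T2 b A hA hbb2 hm2
      have hzc : T1 = ∅ ∨ 2 ≤ T1.card := core_card_zero T1 b A hA hbb1 hz1
      constructor
      · omega
      · intro hc3
        have hT1e : T1.card = 0 := by
          rcases hzc with h | h
          · simp [h]
          · omega
        have hT2c : T2.card = 3 := by omega
        have hTeq : T2 = T j :=
          Finset.eq_of_subset_of_card_le hsub2 (by omega)
        have := (core_sum_abs T2 b A hA hbb2 hT2c hm2).1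
        rw [hTeq] at this
        rw [← this]
        exact Finset.sum_congr rfl (fun i _ => (habs i).symm)
    · -- horizontal segment: main direction is T1
      have hm1 : |∑ i ∈ T1, b i| = A := by rw [← hc1, hd1]; exact abs_of_pos hA
      have hz2 : ∑ i ∈ T2, b i = 0 := by rw [← hc2, hd2]
      have hge1 : 3 ≤ T1.card := core_card_ge T1 b A hA hbb1 hm1
      have hzc : T2 = ∅ ∨ 2 ≤ T2.card := core_card_zero T2 b A hA hbb2 hz2
      constructor
      · omega
      · intro hc3
        have hT2e : T2.card = 0 := by
          rcases hzc with h | h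
          · simp [h]
          · omega
        have hT1c : T1.card = 3 := by omega
        have hTeq : T1 = T j :=
          Finset.eq_of_subset_of_card_le hsub1 (by omega)
        have := (core_sum_abs T1 b A hA hbb1 hT1c hm1).1
        rw [hTeq] at this
        rw [← this]
        exact Finset.sum_congr rfl (fun i _ => (habs i).symm)
  -- cards
  have hkle : ∀ j : Fin m, k j.succ ≤ 3 * m := by
    intro j; rw [← hkm]; exact hk (Fin.le_last _)
  have hcardT : ∀ j : Fin m, (T j).card = k j.succ - k j.castSucc := by
    intro j
    rw [hT_def]
    exact card_window _ _ _ (hkle j)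
  have hsumcard : ∑ j : Fin m, (T j).card = 3 * m := by
    calc ∑ j : Fin m, (T j).card = ∑ j : Fin m, (k j.succ - k j.castSucc) :=
        Finset.sum_congr rfl (fun j _ => hcardT j)
      _ = k (Fin.last m) - k 0 := tele_sum m k hk
      _ = 3 * m := by rw [hkm, hk0]; omega
  have hT3 : ∀ j, (T j).card = 3 := by
    intro j
    by_contra hne
    have hlt : ∑ _j' : Fin m, 3 < ∑ j' : Fin m, (T j').card :=
      Finset.sum_lt_sum (fun j' _ => (key j').1)
        ⟨j, Finset.mem_univ j, by have := (key j).1; omega⟩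
    rw [hsumcard, Finset.sum_const, Finset.card_univ, Fintype.card_fin, smul_eq_mul] at hlt
    omega
  -- disjointness and cover
  have hTdisj : ∀ j1 j2 : Fin m, j1 ≠ j2 → Disjoint (T j1) (T j2) := by
    have haux : ∀ {u w : Fin m}, u < w → Disjoint (T u) (T w) := by
      intro u w huw
      have hle : k u.succ ≤ k w.castSucc := by
        apply hk
        rw [Fin.le_def]
        rw [Fin.lt_def] at huw
        simp only [Fin.val_succ, Fin.coe_castSucc]
        omega
      rw [Finset.disjoint_left]
      intro i h1 h2
      simp only [hT_def, Finset.mem_filter, Finset.mem_univ, true_and] at h1 h2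
      omega
    intro j1 j2 hne
    rcases lt_or_gt_of_ne hne with h | h
    · exact haux h
    · exact (haux h).symm
  have hbiU : Finset.univ.biUnion T = Finset.univ := by
    apply Finset.eq_univ_of_card
    rw [Finset.card_biUnion (fun j1 _ j2 _ h => hTdisj j1 j2 h), hsumcard, Fintype.card_fin]
  -- build the partition
  set parts := Finset.univ.image (fun j : Fin m => (T j).image π) with hparts
  have hpair : ∀ j1 j2 : Fin m, j1 ≠ j2 →
      Disjoint ((T j1).image π) ((T j2).image π) := fun j1 j2 h =>
    (Finset.disjoint_image π.injective).2 (hTdisj j1 j2 h)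
  have hnonempty : ∀ j, ((T j).image π).Nonempty := fun j => by
    rw [Finset.image_nonempty, ← Finset.card_pos, hT3 j]
    norm_num
  have hinj : ∀ j1 j2 : Fin m, (T j1).image π = (T j2).image π → j1 = j2 := by
    intro j1 j2 he
    by_contra hne
    have hd := hpair j1 j2 hne
    rw [he, disjoint_self] at hd
    have := hnonempty j2
    rw [Finset.nonempty_iff_ne_empty] at this
    exact this hd
  refine ⟨⟨parts, ?_, ?_, ?_⟩, ?_, ?_⟩
  · -- supIndep
    apply Finset.supIndep_iff_pairwiseDisjoint.2
    intro q1 hq1 q2 hq2 hne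
    simp only [hparts, Finset.coe_image, Set.mem_image, Finset.coe_univ, Set.image_univ,
      Set.mem_range] at hq1 hq2
    obtain ⟨j1, rfl⟩ := hq1
    obtain ⟨j2, rfl⟩ := hq2
    exact hpair j1 j2 (fun h => hne (by rw [h]))
  · -- sup = univ
    rw [hparts, Finset.sup_image]
    have : (Finset.univ : Finset (Fin m)).sup (id ∘ fun j => (T j).image π)
        = Finset.univ.biUnion (fun j => (T j).image π) :=
      Finset.sup_eq_biUnion _ _
    rw [this, ← Finset.biUnion_image, hbiU, Finset.image_univ_equiv]
  · -- bot not mem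
    intro hbot
    simp only [hparts, Finset.mem_image, Finset.mem_univ, true_and] at hbot
    obtain ⟨j, hj⟩ := hbot
    have := hnonempty j
    rw [hj] at this
    exact Finset.not_nonempty_empty this
  · -- card
    show parts.card = m
    rw [hparts, Finset.card_image_of_injOn (fun j1 _ j2 _ h => hinj j1 j2 h),
      Finset.card_univ, Fintype.card_fin]
  · -- parts properties
    intro q hq
    simp only [hparts, Finset.mem_image, Finset.mem_univ, true_and] at hq
    obtain ⟨j, rfl⟩ := hq
    constructor
    · rw [Finset.card_image_of_injective _ π.injective, hT3 j]
    · rw [Finset.sum_image (fun i _ i' _ h => π.injective h)]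
      exact (key j).2 (hT3 j)

theorem bwd (m : ℕ) (hm : 0 < m) (A : ℤ) (hA : 0 < A)
    (a : Fin (3 * m) → ℤ)
    (δ : ℝ) (hδ0 : 0 ≤ δ)
    (p : ℕ → ℤ × ℤ)
    (hp : ∀ j, p j = (((j / 2 : ℕ) : ℤ) * A, (((j + 1) / 2 % 2 : ℕ) : ℤ) * A))
    (P : Finpartition (Finset.univ : Finset (Fin (3 * m))))
    (hPc : P.parts.card = m) (hPq : ∀ q ∈ P.parts, q.card = 3 ∧ ∑ i ∈ q, a i = A) :
    (∃ (x : ℝ × ℝ) (π : Equiv.Perm (Fin (3 * m))) (ε : Fin (3 * m) → ℤ)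
        (o : Fin (3 * m) → ℤ × ℤ) (k : Fin (m + 1) → ℕ),
      (∀ i, ε i = 1 ∨ ε i = -1) ∧
      (∀ i, o i = (1, 0) ∨ o i = (0, 1)) ∧
      Monotone k ∧ k 0 = 0 ∧ k (Fin.last m) = 3 * m ∧
      (∀ j : Fin (m + 1),
        ‖x + toR (∑ i ∈ Finset.univ.filter (fun i : Fin (3 * m) => (i : ℕ) < k j),
            (ε i * a (π i)) • o i) - toR (p (j : ℕ))‖ ≤ δ)) := by
  classical
  have hp00 : p 0 = 0 := by rw [hp 0]; simp [Prod.ext_iff]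
  -- enumerate parts
  set part : Fin m → Finset (Fin (3 * m)) :=
    fun j => (P.parts.equivFin.symm (Fin.cast hPc.symm j) : _) with hpart_def
  have hpart_mem : ∀ j, part j ∈ P.parts := fun j => (P.parts.equivFin.symm _).2
  have hcard3 : ∀ j, (part j).card = 3 := fun j => (hPq _ (hpart_mem j)).1
  have hsumA : ∀ j, ∑ i ∈ part j, a i = A := fun j => (hPq _ (hpart_mem j)).2
  have hpart_inj : Function.Injective part := by
    intro j1 j2 h
    have h2 := P.parts.equivFin.symm.injective (Subtype.coe_injective h)
    have h3 : (Fin.cast hPc.symm j1 : ℕ) = (Fin.cast hPc.symm j2 : ℕ) := by rw [h2]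
    exact Fin.ext h3
  -- enumerate elements of each part
  set elem : (j : Fin m) → Fin 3 → Fin (3 * m) :=
    fun j r => ((part j).equivFin.symm (Fin.cast (hcard3 j).symm r) : _) with helem_def
  have helem_mem : ∀ j r, elem j r ∈ part j := fun j r => ((part j).equivFin.symm _).2
  have helem_inj : ∀ j, Function.Injective (elem j) := by
    intro j r1 r2 h
    have h2 := (part j).equivFin.symm.injective (Subtype.coe_injective h)
    have h3 : (Fin.cast (hcard3 j).symm r1 : ℕ) = (Fin.cast (hcard3 j).symm r2 : ℕ) := by rw [h2]
    exact Fin.ext h3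
  -- index functions
  have hjlt : ∀ i : Fin (3 * m), (i : ℕ) / 3 < m := fun i => by have := i.isLt; omega
  set jidx : Fin (3 * m) → Fin m := fun i => ⟨(i : ℕ) / 3, hjlt i⟩ with hjidx_def
  set ridx : Fin (3 * m) → Fin 3 := fun i => ⟨(i : ℕ) % 3, by omega⟩ with hridx_def
  set g : Fin (3 * m) → Fin (3 * m) := fun i => elem (jidx i) (ridx i) with hg_def
  have hg_mem : ∀ i, g i ∈ part (jidx i) := fun i => helem_mem _ _
  have hg_inj : Function.Injective g := by
    intro i1 i2 h
    have hjeq : jidx i1 = jidx i2 := by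
      apply hpart_inj
      apply P.eq_of_mem_parts (hpart_mem _) (hpart_mem _) (hg_mem i1)
      rw [h]; exact hg_mem i2
    rw [hg_def] at h
    simp only at h
    rw [hjeq] at h
    have := helem_inj _ h
    have hv : (ridx i1 : ℕ) = (ridx i2 : ℕ) := by rw [this]
    have hj : (jidx i1 : ℕ) = (jidx i2 : ℕ) := by rw [hjeq]
    simp only [hjidx_def, hridx_def] at hv hj
    exact Fin.ext (by omega)
  set π : Equiv.Perm (Fin (3 * m)) :=
    Equiv.ofBijective g (Finite.injective_iff_bijective.1 hg_inj) with hπ_def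
  have hπ_app : ∀ i, π i = g i := fun i => rfl
  -- directions
  set E : Fin m → ℤ :=
    fun j => if 0 < (p ((j : ℕ) + 1) - p (j : ℕ)).1 + (p ((j : ℕ) + 1) - p (j : ℕ)).2
      then 1 else -1 with hE_def
  set O : Fin m → ℤ × ℤ :=
    fun j => if (p ((j : ℕ) + 1) - p (j : ℕ)).1 = 0 then ((0 : ℤ), (1 : ℤ))
      else ((1 : ℤ), (0 : ℤ)) with hO_def
  have hEO : ∀ j : Fin m, (E j * A) • O j = p ((j : ℕ) + 1) - p (j : ℕ) := by
    intro j
    rcases dir_lemma A p hp (j : ℕ) with ⟨hd1, hd2 | hd2⟩ | ⟨hd1, hd2⟩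
    · have hO : O j = (0, 1) := by
        rw [hO_def]; simp only; rw [if_pos hd1]
      have hE : E j = 1 := by
        rw [hE_def]; simp only; rw [hd1, hd2, if_pos (by omega : (0:ℤ) < 0 + A)]
      rw [hO, hE, Prod.ext_iff]
      constructor <;> simp [Prod.smul_mk, smul_eq_mul, hd1, hd2]
    · have hO : O j = (0, 1) := by
        rw [hO_def]; simp only; rw [if_pos hd1]
      have hE : E j = -1 := by
        rw [hE_def]; simp only; rw [hd1, hd2, if_neg (by omega : ¬ (0:ℤ) < 0 + -A)]
      rw [hO, hE, Prod.ext_iff]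
      constructor <;> simp [Prod.smul_mk, smul_eq_mul, hd1, hd2]
    · have hO : O j = (1, 0) := by
        rw [hO_def]; simp only; rw [hd1, if_neg (by omega : ¬ A = (0:ℤ))]
      have hE : E j = 1 := by
        rw [hE_def]; simp only; rw [hd1, hd2, if_pos (by omega : (0:ℤ) < A + 0)]
      rw [hO, hE, Prod.ext_iff]
      constructor <;> simp [Prod.smul_mk, smul_eq_mul, hd1, hd2]
  set ε : Fin (3 * m) → ℤ := fun i => E (jidx i) with hε_def
  set o : Fin (3 * m) → ℤ × ℤ := fun i => O (jidx i) with ho_def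
  set k : Fin (m + 1) → ℕ := fun j => 3 * (j : ℕ) with hk_def
  -- window sums
  have hwin : ∀ j0 : Fin m,
      ∑ i ∈ Finset.univ.filter
        (fun i : Fin (3 * m) => 3 * (j0 : ℕ) ≤ (i : ℕ) ∧ (i : ℕ) < 3 * (j0 : ℕ) + 3),
        (ε i * a (π i)) • o i = p ((j0 : ℕ) + 1) - p (j0 : ℕ) := by
    intro j0
    set W := Finset.univ.filter
      (fun i : Fin (3 * m) => 3 * (j0 : ℕ) ≤ (i : ℕ) ∧ (i : ℕ) < 3 * (j0 : ℕ) + 3) with hW_def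
    have hW3 : ∀ i ∈ W, jidx i = j0 := by
      intro i hi
      rw [hW_def, Finset.mem_filter] at hi
      exact Fin.ext (by simp only [hjidx_def]; omega)
    have hWcard : W.card = 3 := by
      rw [hW_def, card_window _ _ _ (by have := j0.isLt; omega)]
      omega
    have hWsub : W.image π ⊆ part j0 := by
      intro y hy
      rw [Finset.mem_image] at hy
      obtain ⟨i, hi, rfl⟩ := hy
      rw [hπ_app, ← hW3 i hi]
      exact hg_mem i
    have hWim : W.image π = part j0 := by
      apply Finset.eq_of_subset_of_card_le hWsub
      rw [Finset.card_image_of_injective _ π.injective, hWcard, hcard3]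
    have hWsum : ∑ i ∈ W, a (π i) = A := by
      rw [← Finset.sum_image (fun i _ i' _ h => π.injective h), hWim]
      exact hsumA j0
    calc ∑ i ∈ W, (ε i * a (π i)) • o i
        = ∑ i ∈ W, (E j0 * a (π i)) • O j0 := by
          apply Finset.sum_congr rfl
          intro i hi
          rw [hε_def, ho_def]
          simp only [hW3 i hi]
      _ = (∑ i ∈ W, E j0 * a (π i)) • O j0 := by rw [Finset.sum_smul]
      _ = (E j0 * A) • O j0 := by rw [← Finset.mul_sum, hWsum]
      _ = p ((j0 : ℕ) + 1) - p (j0 : ℕ) := hEO j0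
  -- partial sums
  have hS : ∀ t : ℕ, t ≤ m →
      ∑ i ∈ Finset.univ.filter (fun i : Fin (3 * m) => (i : ℕ) < 3 * t),
        (ε i * a (π i)) • o i = p t - p 0 := by
    intro t
    induction t with
    | zero => intro _; simp
    | succ n ih =>
      intro hn
      have hn' : n ≤ m := by omega
      have hnm : n < m := by omega
      have hunion : Finset.univ.filter (fun i : Fin (3 * m) => (i : ℕ) < 3 * (n + 1))
          = Finset.univ.filter (fun i : Fin (3 * m) => (i : ℕ) < 3 * n)
            ∪ Finset.univ.filter
              (fun i : Fin (3 * m) => 3 * n ≤ (i : ℕ) ∧ (i : ℕ) < 3 * n + 3) := by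
        ext i
        simp only [Finset.mem_union, Finset.mem_filter, Finset.mem_univ, true_and]
        omega
      have hdisj : Disjoint (Finset.univ.filter (fun i : Fin (3 * m) => (i : ℕ) < 3 * n))
          (Finset.univ.filter
            (fun i : Fin (3 * m) => 3 * n ≤ (i : ℕ) ∧ (i : ℕ) < 3 * n + 3)) := by
        rw [Finset.disjoint_left]
        intro i h1 h2
        simp only [Finset.mem_filter, Finset.mem_univ, true_and] at h1 h2
        omega
      rw [hunion, Finset.sum_union hdisj, ih hn']
      have := hwin ⟨n, hnm⟩
      simp only at this
      rw [this]
      abel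
  -- assemble
  refine ⟨0, π, ε, o, k, ?_, ?_, ?_, ?_, ?_, ?_⟩
  · intro i
    rw [hε_def, hE_def]
    simp only
    split <;> simp
  · intro i
    rw [ho_def, hO_def]
    simp only
    split <;> simp
  · intro j1 j2 h
    rw [hk_def]
    simp only
    have : (j1 : ℕ) ≤ (j2 : ℕ) := h
    omega
  · rw [hk_def]; simp
  · rw [hk_def]; simp [Fin.val_last]
  · intro j
    have hj : (j : ℕ) ≤ m := by have := j.isLt; omega
    have hsum3 := hS (j : ℕ) hj
    rw [hk_def]
    simp only
    rw [hsum3, hp00, sub_zero]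
    have he : (0 : ℝ × ℝ) + toR (p (j : ℕ)) - toR (p (j : ℕ)) = 0 := by abel
    rw [he, norm_zero]
    exact hδ0

/-- DPA-S hardness reduction: given 3-Partition data, an axis-aligned path
using each strut length `a i` exactly once that starts in the `δ`-box
(`δ < 1/2`, `ℓ∞`-norm) of `p 0` and visits the `δ`-boxes of the zigzag
polyline's turning points `p j = (⌊j/2⌋·A, (⌈j/2⌉ mod 2)·A)` in order
exists iff `Fin (3m)` can be partitioned into `m` three-element sets each
with `a`-sum `A`. (Steps are indexed 0-based: the node after the first `t`
steps is `x` plus the sum of the steps with index `< t`.) -/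

theorem stmt_6 (m : ℕ) (hm : 0 < m) (A : ℤ) (hA : 0 < A)
    (a : Fin (3 * m) → ℤ)
    (h4 : ∀ i, 4 * a i > A) (h2 : ∀ i, 2 * a i < A)
    (hsum : ∑ i, a i = (m : ℤ) * A)
    (δ : ℝ) (hδ0 : 0 ≤ δ) (hδ : δ < 1 / 2)
    (p : ℕ → ℤ × ℤ)
    (hp : ∀ j, p j = (((j / 2 : ℕ) : ℤ) * A, (((j + 1) / 2 % 2 : ℕ) : ℤ) * A)) :
    (∃ (x : ℝ × ℝ) (π : Equiv.Perm (Fin (3 * m))) (ε : Fin (3 * m) → ℤ)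
        (o : Fin (3 * m) → ℤ × ℤ) (k : Fin (m + 1) → ℕ),
      (∀ i, ε i = 1 ∨ ε i = -1) ∧
      (∀ i, o i = (1, 0) ∨ o i = (0, 1)) ∧
      Monotone k ∧ k 0 = 0 ∧ k (Fin.last m) = 3 * m ∧
      (∀ j : Fin (m + 1),
        ‖x + toR (∑ i ∈ Finset.univ.filter (fun i : Fin (3 * m) => (i : ℕ) < k j),
            (ε i * a (π i)) • o i) - toR (p (j : ℕ))‖ ≤ δ)) ↔
    (∃ P : Finpartition (Finset.univ : Finset (Fin (3 * m))),
      P.parts.card = m ∧ ∀ q ∈ P.parts, q.card = 3 ∧ ∑ i ∈ q, a i = A) := by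
  constructor
  · rintro ⟨x, π, ε, o, k, hε, ho, hk, hk0, hkm, hbox⟩
    exact fwd m hm A hA a h4 h2 hsum δ hδ0 hδ p hp x π ε o k hε ho hk hk0 hkm hbox
  · rintro ⟨P, hPc, hPq⟩
    exact bwd m hm A hA a δ hδ0 p hp P hPc hPq
end

section
/- Let m, A be positive integers and a : {1,…,3m} → ℤ with 4·a(i) > A and 2·a(i) < A for all i and ∑_{i=1}^{3m} a(i) = m·A. Let δ be a real number with 0 ≤ δ < 1/2, set p_j := (⌊j/2⌋·A, (⌈j/2⌉ mod 2)·A) for j = 0,…,m, and let F := ⋃_{j=1}^{m} [p_{j−1}, p_j] ⊆ ℝ² be the zigzag polyline. The following are equivalent: (i) there exist a start point x ∈ ℝ², a permutation π of {1,…,3m}, signs ε(i) ∈ {−1,1}, orientations o(i) ∈ {e₁, e₂}, and indices 0 = k₀ ≤ k₁ ≤ ⋯ ≤ k_m = 3m such that, with steps v(i) := ε(i)·a(π(i))·o(i) and nodes x_i := x + ∑_{1 ≤ l ≤ i} v(l), one has ‖x_{k_j} − p_j‖_∞ ≤ δ for every j ∈ {0,…,m}, and additionally every point of every segment [x_{i−1},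 x_i] (i = 1,…,3m) lies within ℓ∞-distance δ of some point of F; (ii) {1,…,3m} can be partitioned into m three-element sets each with a-sum A. -/
lemma toR_add (u v : ℤ × ℤ) : toR (u + v) = toR u + toR v := by
  simp [toR, Prod.ext_iff]

lemma toR_smul (c : ℤ) (w : ℤ × ℤ) : toR (c • w) = (c : ℝ) • toR w := by
  simp [toR, Prod.ext_iff]

lemma toR_eq_zero (w : ℤ × ℤ) (h : ‖toR w‖ < 1) : w = 0 := by
  rw [Prod.norm_def] at h
  have h1 : |(w.1 : ℝ)| < 1 := lt_of_le_of_lt (le_max_left _ _) (by simpa [toR, Real.norm_eq_abs] using h)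
  have h2 : |(w.2 : ℝ)| < 1 := lt_of_le_of_lt (le_max_right _ _) (by simpa [toR, Real.norm_eq_abs] using h)
  have h1' : |w.1| < 1 := by exact_mod_cast h1
  have h2' : |w.2| < 1 := by exact_mod_cast h2
  have a1 := abs_lt.mp h1'
  have a2 := abs_lt.mp h2'
  ext <;> simp <;> omega
lemma delta_cases (A : ℤ) (hA : 0 < A) (p : ℕ → ℤ × ℤ)
    (hp : ∀ j, p j = (((j / 2 : ℕ) : ℤ) * A, (((j + 1) / 2 % 2 : ℕ) : ℤ) * A)) (j : ℕ) :
    p (j+1) - p j = (A, 0) ∨ p (j+1) - p j = (0, A) ∨ p (j+1) - p j = (0, -A) := by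
  have h : j % 4 = 0 ∨ j % 4 = 1 ∨ j % 4 = 2 ∨ j % 4 = 3 := by omega
  rw [hp, hp]
  rcases h with h|h|h|h
  · right; left
    have e2 : ((j+1+1)/2 % 2 : ℕ) = 1 := by omega
    have e3 : ((j+1)/2 % 2 : ℕ) = 0 := by omega
    have e1 : ((j+1)/2 : ℕ) = j/2 := by omega
    rw [e2, e3, e1]
    simp [Prod.ext_iff]
  · left
    have e2 : ((j+1+1)/2 % 2 : ℕ) = (j+1)/2 % 2 := by omega
    have e1 : ((j+1)/2 : ℕ) = j/2 + 1 := by omega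
    rw [e2, e1]
    simp [Prod.ext_iff]
    push_cast; ring
  · right; right
    have e2 : ((j+1+1)/2 % 2 : ℕ) = 0 := by omega
    have e3 : ((j+1)/2 % 2 : ℕ) = 1 := by omega
    have e1 : ((j+1)/2 : ℕ) = j/2 := by omega
    rw [e2, e3, e1]
    simp [Prod.ext_iff]
  · left
    have e2 : ((j+1+1)/2 % 2 : ℕ) = (j+1)/2 % 2 := by omega
    have e1 : ((j+1)/2 : ℕ) = j/2 + 1 := by omega
    rw [e2, e1]
    simp [Prod.ext_iff]
    push_cast; ring
set_option maxHeartbeats 1000000 in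
lemma key_scalar (A b1 b2 b3 e1 e2 e3 q1 q2 q3 r1 r2 r3 d1 d2 : ℤ)
    (hA : 0 < A)
    (hb1 : 4 * b1 > A) (hb1' : 2 * b1 < A)
    (hb2 : 4 * b2 > A) (hb2' : 2 * b2 < A)
    (hb3 : 4 * b3 > A) (hb3' : 2 * b3 < A)
    (he1 : e1 = 1 ∨ e1 = -1) (he2 : e2 = 1 ∨ e2 = -1) (he3 : e3 = 1 ∨ e3 = -1)
    (hq1 : (q1 = 1 ∧ r1 = 0) ∨ (q1 = 0 ∧ r1 = 1))
    (hq2 : (q2 = 1 ∧ r2 = 0) ∨ (q2 = 0 ∧ r2 = 1))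
    (hq3 : (q3 = 1 ∧ r3 = 0) ∨ (q3 = 0 ∧ r3 = 1))
    (hd : (d1 = A ∧ d2 = 0) ∨ (d1 = 0 ∧ d2 = A) ∨ (d1 = 0 ∧ d2 = -A))
    (h1 : e1 * b1 * q1 + e2 * b2 * q2 + e3 * b3 * q3 = d1)
    (h2 : e1 * b1 * r1 + e2 * b2 * r2 + e3 * b3 * r3 = d2) :
    b1 + b2 + b3 = A := by
  rcases he1 with rfl|rfl <;> rcases he2 with rfl|rfl <;> rcases he3 with rfl|rfl <;>
  rcases hq1 with ⟨rfl,rfl⟩|⟨rfl,rfl⟩ <;> rcases hq2 with ⟨rfl,rfl⟩|⟨rfl,rfl⟩ <;>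
  rcases hq3 with ⟨rfl,rfl⟩|⟨rfl,rfl⟩ <;> omega

lemma key_triple (A : ℤ) (b1 b2 b3 e1 e2 e3 : ℤ) (o1 o2 o3 Δ : ℤ × ℤ)
    (hA : 0 < A)
    (hb1 : 4 * b1 > A) (hb1' : 2 * b1 < A)
    (hb2 : 4 * b2 > A) (hb2' : 2 * b2 < A)
    (hb3 : 4 * b3 > A) (hb3' : 2 * b3 < A)
    (he1 : e1 = 1 ∨ e1 = -1) (he2 : e2 = 1 ∨ e2 = -1) (he3 : e3 = 1 ∨ e3 = -1)
    (ho1 : o1 = (1,0) ∨ o1 = (0,1)) (ho2 : o2 = (1,0) ∨ o2 = (0,1))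
    (ho3 : o3 = (1,0) ∨ o3 = (0,1))
    (hΔ : Δ = (A,0) ∨ Δ = (0,A) ∨ Δ = (0,-A))
    (hs : (e1 * b1) • o1 + (e2 * b2) • o2 + (e3 * b3) • o3 = Δ) :
    b1 + b2 + b3 = A := by
  have h1 := congrArg Prod.fst hs
  have h2 := congrArg Prod.snd hs
  simp only [Prod.fst_add, Prod.snd_add, Prod.smul_fst, Prod.smul_snd, smul_eq_mul] at h1 h2
  have hq : ∀ o : ℤ × ℤ, o = (1,0) ∨ o = (0,1) → (o.1 = 1 ∧ o.2 = 0) ∨ (o.1 = 0 ∧ o.2 = 1) := by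
    rintro o (rfl|rfl) <;> simp
  have hd : (Δ.1 = A ∧ Δ.2 = 0) ∨ (Δ.1 = 0 ∧ Δ.2 = A) ∨ (Δ.1 = 0 ∧ Δ.2 = -A) := by
    rcases hΔ with rfl|rfl|rfl <;> simp
  exact key_scalar A b1 b2 b3 e1 e2 e3 o1.1 o2.1 o3.1 o1.2 o2.2 o3.2 Δ.1 Δ.2 hA
    hb1 hb1' hb2 hb2' hb3 hb3' he1 he2 he3 (hq _ ho1) (hq _ ho2) (hq _ ho3) hd h1 h2

theorem forward_dir (m : ℕ) (hm : 0 < m) (A : ℤ) (hA : 0 < A)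
    (a : Fin (3 * m) → ℤ)
    (h4 : ∀ i, 4 * a i > A) (h2 : ∀ i, 2 * a i < A)
    (δ : ℝ) (hδ0 : 0 ≤ δ) (hδ : δ < 1 / 2)
    (p : ℕ → ℤ × ℤ)
    (hp : ∀ j, p j = (((j / 2 : ℕ) : ℤ) * A, (((j + 1) / 2 % 2 : ℕ) : ℤ) * A))
    (x : ℝ × ℝ) (π : Equiv.Perm (Fin (3 * m))) (ε : Fin (3 * m) → ℤ)
    (o : Fin (3 * m) → ℤ × ℤ) (k : Fin (m + 1) → ℕ) (X : ℕ → ℝ × ℝ)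
    (hε : ∀ i, ε i = 1 ∨ ε i = -1)
    (ho : ∀ i, o i = (1, 0) ∨ o i = (0, 1))
    (hX : ∀ t : ℕ, X t = x + toR (∑ i ∈ Finset.univ.filter
        (fun i : Fin (3 * m) => (i : ℕ) < t), (ε i * a (π i)) • o i))
    (hkmono : Monotone k) (hk0 : k 0 = 0) (hklast : k (Fin.last m) = 3 * m)
    (hnode : ∀ j : Fin (m + 1), ‖X (k j) - toR (p (j : ℕ))‖ ≤ δ) :
    ∃ P : Finpartition (Finset.univ : Finset (Fin (3 * m))),
      P.parts.card = m ∧ ∀ q ∈ P.parts, q.card = 3 ∧ ∑ i ∈ q, a i = A := by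
  classical
  set S : ℕ → ℤ × ℤ := fun t => ∑ i ∈ Finset.univ.filter
      (fun i : Fin (3 * m) => (i : ℕ) < t), (ε i * a (π i)) • o i with hS
  set B : Fin m → Finset (Fin (3 * m)) := fun j =>
    Finset.univ.filter (fun i => k j.castSucc ≤ (i : ℕ) ∧ (i : ℕ) < k j.succ) with hB
  have hXS : ∀ t, X t = x + toR (S t) := hX
  -- splitting the sum
  have hsplit : ∀ j : Fin m, S (k j.succ) - S (k j.castSucc)
      = ∑ i ∈ B j, (ε i * a (π i)) • o i := by
    intro j
    have hmon : k j.castSucc ≤ k j.succ := hkmono (Fin.castSucc_lt_succ : j.castSucc < j.succ).le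
    have hdisj : Disjoint (Finset.univ.filter (fun i : Fin (3 * m) => (i : ℕ) < k j.castSucc))
        (B j) := by
      rw [Finset.disjoint_left]
      intro i hi hi'
      simp only [hB, Finset.mem_filter, Finset.mem_univ, true_and] at hi hi'
      omega
    have hset : Finset.univ.filter (fun i : Fin (3 * m) => (i : ℕ) < k j.succ)
        = Finset.univ.filter (fun i : Fin (3 * m) => (i : ℕ) < k j.castSucc) ∪ B j := by
      ext i
      simp only [hB, Finset.mem_filter, Finset.mem_univ, true_and, Finset.mem_union]
      omega
    rw [sub_eq_iff_eq_add']
    simp only [hS]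
    rw [hset, Finset.sum_union hdisj]
  -- node displacement equals polyline displacement
  have hdiff : ∀ j : Fin m, (∑ i ∈ B j, (ε i * a (π i)) • o i)
      = p ((j : ℕ) + 1) - p (j : ℕ) := by
    intro j
    rw [← hsplit]
    have n1 := hnode j.castSucc
    have n2 := hnode j.succ
    rw [hXS] at n1 n2
    rw [Fin.coe_castSucc] at n1
    rw [Fin.val_succ] at n2
    have hw : toR (S (k j.succ) - S (k j.castSucc) - (p ((j : ℕ) + 1) - p (j : ℕ)))
        = (x + toR (S (k j.succ)) - toR (p ((j : ℕ) + 1)))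
          - (x + toR (S (k j.castSucc)) - toR (p (j : ℕ))) := by
      rw [toR_sub, toR_sub, toR_sub]
      abel
    have hnorm : ‖toR (S (k j.succ) - S (k j.castSucc) - (p ((j : ℕ) + 1) - p (j : ℕ)))‖ < 1 := by
      rw [hw]
      calc ‖_ - _‖ ≤ _ + _ := norm_sub_le _ _
        _ < 1 := by linarith [n1, n2]
    exact sub_eq_zero.mp (toR_eq_zero _ hnorm)
  -- positivity of a
  have hapos : ∀ i, 0 < a i := by
    intro i
    have := h4 i
    omega
  -- componentwise bound on steps
  have hcomp : ∀ i : Fin (3 * m), |((ε i * a (π i)) • o i).1| ≤ a (π i)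
      ∧ |((ε i * a (π i)) • o i).2| ≤ a (π i) := by
    intro i
    have ha := hapos (π i)
    rcases hε i with h | h <;> rcases ho i with h' | h' <;>
      simp [h, h', abs_of_pos ha, ha.le, Prod.smul_fst, Prod.smul_snd]
  -- each block's a-sum is at least A
  have habs : ∀ j : Fin m, A ≤ ∑ i ∈ B j, a (π i) := by
    intro j
    have hd := delta_cases A hA p hp (j : ℕ)
    have hdj := hdiff j
    have habs1 : |(∑ i ∈ B j, (ε i * a (π i)) • o i).1| ≤ ∑ i ∈ B j, a (π i) := by
      rw [Prod.fst_sum]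
      refine le_trans (Finset.abs_sum_le_sum_abs _ _) (Finset.sum_le_sum ?_)
      exact fun i _ => (hcomp i).1
    have habs2 : |(∑ i ∈ B j, (ε i * a (π i)) • o i).2| ≤ ∑ i ∈ B j, a (π i) := by
      rw [Prod.snd_sum]
      refine le_trans (Finset.abs_sum_le_sum_abs _ _) (Finset.sum_le_sum ?_)
      exact fun i _ => (hcomp i).2
    rw [hdj] at habs1 habs2
    rcases hd with h | h | h <;> rw [h] at habs1 habs2 <;>
      simp [abs_of_pos hA, abs_of_neg (neg_neg_iff_pos.mpr hA)] at habs1 habs2 <;> omega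
  -- each block has at least 3 elements
  have hge3 : ∀ j : Fin m, 3 ≤ (B j).card := by
    intro j
    by_contra hc
    push_neg at hc
    have hbound : ∑ i ∈ B j, (2 * a (π i)) ≤ ∑ _i ∈ B j, (A - 1) :=
      Finset.sum_le_sum (fun i _ => by have := h2 (π i); omega)
    rw [Finset.sum_const, nsmul_eq_mul, ← Finset.mul_sum] at hbound
    have hcard : ((B j).card : ℤ) ≤ 2 := by exact_mod_cast Nat.le_of_lt_succ hc
    have h2A := habs j
    have hmul : ((B j).card : ℤ) * (A - 1) ≤ 2 * (A - 1) :=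
      mul_le_mul_of_nonneg_right hcard (by omega)
    linarith
  -- every position lies in some block
  have hcover : ∀ i : Fin (3 * m), ∃ j : Fin m,
      k j.castSucc ≤ (i : ℕ) ∧ (i : ℕ) < k j.succ := by
    intro i
    have hiN : (i : ℕ) < 3 * m := i.2
    have hTne : (Finset.univ.filter (fun j : Fin (m + 1) => k j ≤ (i : ℕ))).Nonempty :=
      ⟨0, by simp [hk0]⟩
    set T := Finset.univ.filter (fun j : Fin (m + 1) => k j ≤ (i : ℕ)) with hT
    set jm := T.max' hTne with hjmdef
    have hjm : k jm ≤ (i : ℕ) := (Finset.mem_filter.mp (T.max'_mem hTne)).2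
    have hjmlt : (jm : ℕ) < m := by
      by_contra hcon
      have hjl : jm = Fin.last m := by
        have := jm.2
        apply Fin.ext
        simp only [Fin.val_last]
        omega
      rw [hjl, hklast] at hjm
      omega
    refine ⟨⟨(jm : ℕ), hjmlt⟩, ?_, ?_⟩
    · have he : (⟨(jm : ℕ), hjmlt⟩ : Fin m).castSucc = jm := by
        apply Fin.ext
        simp
      rw [he]
      exact hjm
    · by_contra hcon
      push_neg at hcon
      have hmem : (⟨(jm : ℕ), hjmlt⟩ : Fin m).succ ∈ T :=
        Finset.mem_filter.mpr ⟨Finset.mem_univ _, hcon⟩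
      have hle : (⟨(jm : ℕ), hjmlt⟩ : Fin m).succ ≤ jm := T.le_max' _ hmem
      rw [Fin.le_def] at hle
      simp only [Fin.val_succ] at hle
      omega
  -- blocks are pairwise disjoint
  have hBdisj : ∀ j j' : Fin m, j ≠ j' → Disjoint (B j) (B j') := by
    have hkey : ∀ j j' : Fin m, j < j' → Disjoint (B j) (B j') := by
      intro j j' hlt
      have hkk : k j.succ ≤ k j'.castSucc := by
        apply hkmono
        rw [Fin.le_def]
        simp only [Fin.val_succ, Fin.coe_castSucc]
        exact hlt
      rw [Finset.disjoint_left]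
      intro i hi hi'
      simp only [hB, Finset.mem_filter, Finset.mem_univ, true_and] at hi hi'
      omega
    intro j j' hne
    rcases lt_or_gt_of_ne hne with h | h
    · exact hkey j j' h
    · exact (hkey j' j h).symm
  -- the blocks biUnion to everything
  have hbiUnion : Finset.univ.biUnion B = (Finset.univ : Finset (Fin (3 * m))) := by
    ext i
    simp only [Finset.mem_biUnion, Finset.mem_univ, true_and, iff_true]
    obtain ⟨j, hj1, hj2⟩ := hcover i
    exact ⟨j, by simp only [hB, Finset.mem_filter, Finset.mem_univ, true_and]; exact ⟨hj1, hj2⟩⟩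
  -- sum of block cards
  have hsumcard : ∑ j : Fin m, (B j).card = 3 * m := by
    rw [← Finset.card_biUnion (fun j _ j' _ hne => hBdisj j j' hne)]
    rw [hbiUnion, Finset.card_univ, Fintype.card_fin]
  -- each block has exactly 3 elements
  have hcard3 : ∀ j : Fin m, (B j).card = 3 := by
    intro j
    by_contra hc
    have h4c : 4 ≤ (B j).card := by
      have := hge3 j
      omega
    have hlt : ∑ _j : Fin m, 3 < ∑ j' : Fin m, (B j').card := by
      apply Finset.sum_lt_sum (fun j' _ => hge3 j')
      exact ⟨j, Finset.mem_univ j, by omega⟩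
    rw [Finset.sum_const, Finset.card_univ, Fintype.card_fin, smul_eq_mul] at hlt
    omega
  -- each block's strut lengths sum to A
  have hblocksum : ∀ j : Fin m, ∑ i ∈ B j, a (π i) = A := by
    intro j
    obtain ⟨i1, i2, i3, h12, h13, h23, hBeq⟩ := Finset.card_eq_three.mp (hcard3 j)
    have hne1 : i1 ∉ ({i2, i3} : Finset (Fin (3 * m))) := by simp [h12, h13]
    have hne2 : i2 ∉ ({i3} : Finset (Fin (3 * m))) := by simp [h23]
    have hsv : (ε i1 * a (π i1)) • o i1 + (ε i2 * a (π i2)) • o i2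
        + (ε i3 * a (π i3)) • o i3 = p ((j : ℕ) + 1) - p (j : ℕ) := by
      rw [← hdiff j, hBeq, Finset.sum_insert hne1, Finset.sum_insert hne2,
        Finset.sum_singleton, add_assoc]
    have hres := key_triple A (a (π i1)) (a (π i2)) (a (π i3)) (ε i1) (ε i2) (ε i3)
      (o i1) (o i2) (o i3) (p ((j : ℕ) + 1) - p (j : ℕ)) hA
      (h4 _) (h2 _) (h4 _) (h2 _) (h4 _) (h2 _)
      (hε i1) (hε i2) (hε i3) (ho i1) (ho i2) (ho i3)
      (delta_cases A hA p hp (j : ℕ)) hsv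
    rw [hBeq, Finset.sum_insert hne1, Finset.sum_insert hne2, Finset.sum_singleton,
      ← add_assoc]
    exact hres
  -- parts of the partition
  set q : Fin m → Finset (Fin (3 * m)) := fun j => (B j).image π with hq
  have hqcard : ∀ j, (q j).card = 3 := by
    intro j
    rw [hq]
    rw [Finset.card_image_of_injective _ π.injective]
    exact hcard3 j
  have hqdisj : ∀ j j' : Fin m, j ≠ j' → Disjoint (q j) (q j') := by
    intro j j' hne
    rw [Finset.disjoint_left]
    rintro z hz hz'
    simp only [hq, Finset.mem_image] at hz hz'
    obtain ⟨i, hi, rfl⟩ := hz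
    obtain ⟨i', hi', he⟩ := hz'
    have : i' = i := π.injective he
    subst this
    exact (Finset.disjoint_left.mp (hBdisj j j' hne)) hi hi'
  have hqinj : Function.Injective q := by
    intro j j' he
    by_contra hne
    have hd := hqdisj j j' hne
    rw [he, disjoint_self] at hd
    have h3 := hqcard j'
    rw [hd] at h3
    simp at h3
  have hqsum : ∀ j, ∑ i ∈ q j, a i = A := by
    intro j
    rw [hq]
    rw [Finset.sum_image (fun i _ i' _ h => π.injective h)]
    exact hblocksum j
  refine ⟨⟨Finset.univ.image q, ?_, ?_, ?_⟩, ?_, ?_⟩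
  · rw [Finset.supIndep_iff_pairwiseDisjoint]
    rintro s hs t ht hst
    simp only [Finset.coe_image, Set.mem_image, Finset.mem_coe] at hs ht
    obtain ⟨j, _, rfl⟩ := hs
    obtain ⟨j', _, rfl⟩ := ht
    exact hqdisj j j' (fun h => hst (by rw [h]))
  · ext z
    simp only [Finset.mem_sup, Finset.mem_image, Finset.mem_univ, true_and, iff_true, id]
    obtain ⟨j, hj1, hj2⟩ := hcover (π.symm z)
    refine ⟨q j, ⟨j, rfl⟩, ?_⟩
    rw [hq]
    refine Finset.mem_image.mpr ⟨π.symm z, ?_, π.apply_symm_apply z⟩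
    simp only [hB, Finset.mem_filter, Finset.mem_univ, true_and]
    exact ⟨hj1, hj2⟩
  · intro hbot
    obtain ⟨j, _, hj⟩ := Finset.mem_image.mp hbot
    have := hqcard j
    rw [hj] at this
    simp [Finset.bot_eq_empty] at this
  · rw [Finset.card_image_of_injective _ hqinj, Finset.card_univ, Fintype.card_fin]
  · intro s hs
    obtain ⟨j, _, rfl⟩ := Finset.mem_image.mp hs
    exact ⟨hqcard j, hqsum j⟩

theorem backward_dir (m : ℕ) (hm : 0 < m) (A : ℤ) (hA : 0 < A)
    (a : Fin (3 * m) → ℤ)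
    (h4 : ∀ i, 4 * a i > A) (h2 : ∀ i, 2 * a i < A)
    (δ : ℝ) (hδ0 : 0 ≤ δ) (hδ : δ < 1 / 2)
    (p : ℕ → ℤ × ℤ)
    (hp : ∀ j, p j = (((j / 2 : ℕ) : ℤ) * A, (((j + 1) / 2 % 2 : ℕ) : ℤ) * A))
    (F : Set (ℝ × ℝ))
    (hF : F = ⋃ j ∈ Finset.Icc 1 m, segment ℝ (toR (p (j - 1))) (toR (p j)))
    (P : Finpartition (Finset.univ : Finset (Fin (3 * m))))
    (hPc : P.parts.card = m)
    (hP : ∀ q ∈ P.parts, q.card = 3 ∧ ∑ i ∈ q, a i = A) :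
    ∃ (x : ℝ × ℝ) (π : Equiv.Perm (Fin (3 * m))) (ε : Fin (3 * m) → ℤ)
        (o : Fin (3 * m) → ℤ × ℤ) (k : Fin (m + 1) → ℕ) (X : ℕ → ℝ × ℝ),
      (∀ i, ε i = 1 ∨ ε i = -1) ∧
      (∀ i, o i = (1, 0) ∨ o i = (0, 1)) ∧
      (∀ t : ℕ, X t = x + toR (∑ i ∈ Finset.univ.filter
          (fun i : Fin (3 * m) => (i : ℕ) < t), (ε i * a (π i)) • o i)) ∧
      Monotone k ∧ k 0 = 0 ∧ k (Fin.last m) = 3 * m ∧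
      (∀ j : Fin (m + 1), ‖X (k j) - toR (p (j : ℕ))‖ ≤ δ) ∧
      (∀ i : ℕ, 1 ≤ i → i ≤ 3 * m →
        ∀ y ∈ segment ℝ (X (i - 1)) (X i), ∃ z ∈ F, ‖y - z‖ ≤ δ) := by
  classical
  have hA' : (0 : ℝ) < (A : ℝ) := by exact_mod_cast hA
  -- enumerate the parts
  have hcardsub : Fintype.card {s // s ∈ P.parts} = m := by
    rw [Fintype.card_coe]; exact hPc
  set eqv : {s // s ∈ P.parts} ≃ Fin m := Fintype.equivFinOfCardEq hcardsub with heqv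
  set Q : Fin m → Finset (Fin (3 * m)) := fun b => (eqv.symm b : Finset (Fin (3 * m)))
    with hQdef
  have hQmem : ∀ b, Q b ∈ P.parts := fun b => (eqv.symm b).2
  have hQ3 : ∀ b, (Q b).card = 3 := fun b => (hP _ (hQmem b)).1
  have hQA : ∀ b, ∑ i ∈ Q b, a i = A := fun b => (hP _ (hQmem b)).2
  have hQinj : Function.Injective Q := by
    intro b b' h
    have := Subtype.coe_injective (a₁ := eqv.symm b) (a₂ := eqv.symm b') h
    exact eqv.symm.injective this
  have hQdisj : ∀ b b', b ≠ b' → Disjoint (Q b) (Q b') := by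
    intro b b' hne
    exact P.disjoint (hQmem b) (hQmem b') (fun h => hne (hQinj h))
  have hQcover : ∀ i : Fin (3 * m), ∃ b, i ∈ Q b := by
    intro i
    obtain ⟨t, ht, hit⟩ := P.exists_mem (Finset.mem_univ i)
    refine ⟨eqv ⟨t, ht⟩, ?_⟩
    rw [hQdef]
    simp only [Equiv.symm_apply_apply]
    exact hit
  -- fintype equivalences for each part
  have hcard3 : ∀ b, Fintype.card {x // x ∈ Q b} = 3 := by
    intro b; rw [Fintype.card_coe]; exact hQ3 b
  have e : ∀ b : Fin m, {x // x ∈ Q b} ≃ Fin 3 :=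
    fun b => Fintype.equivFinOfCardEq (hcard3 b)
  -- the permutation, as a composition
  have hginj : Function.Injective (fun br : Fin m × Fin 3 => ((e br.1).symm br.2 : Fin (3 * m))) := by
    rintro ⟨b, r⟩ ⟨b', r'⟩ h
    simp only at h
    have hb : b = b' := by
      by_contra hne
      have h1 := ((e b).symm r).2
      have h2 := ((e b').symm r').2
      rw [h] at h1
      exact Finset.disjoint_left.mp (hQdisj b b' hne) h1 h2
    subst hb
    have hr : r = r' := (e b).symm.injective (Subtype.ext h)
    rw [hr]
  have hidx : ∀ t : Fin (3 * m), ((t : ℕ) / 3 < m) ∧ ((t : ℕ) % 3 < 3) := by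
    intro t; have := t.2; omega
  set idx : Fin (3 * m) → Fin m × Fin 3 :=
    fun t => (⟨(t : ℕ) / 3, (hidx t).1⟩, ⟨(t : ℕ) % 3, (hidx t).2⟩) with hidxdef
  have hidxinj : Function.Injective idx := by
    intro t t' h
    rw [hidxdef] at h
    simp only [Prod.mk.injEq, Fin.mk.injEq] at h
    exact Fin.ext (by omega)
  set f : Fin (3 * m) → Fin (3 * m) :=
    fun t => ((e (idx t).1).symm (idx t).2 : Fin (3 * m)) with hf
  have hfinj : Function.Injective f := by
    intro t t' h
    exact hidxinj (hginj h)
  have hfmem : ∀ t : Fin (3 * m), f t ∈ Q (idx t).1 := fun t => ((e _).symm _).2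
  set π : Equiv.Perm (Fin (3 * m)) := Equiv.ofBijective f
    (Finite.injective_iff_bijective.mp hfinj) with hπ
  have hπf : ∀ t, π t = f t := fun t => rfl
  have hapos : ∀ i, 0 < a i := by
    intro i
    have := h4 i
    omega
  -- block positions and their image
  have hbp : ∀ (b : ℕ) (hb : b < m),
      Finset.univ.filter (fun t : Fin (3 * m) => 3 * b ≤ (t : ℕ) ∧ (t : ℕ) < 3 * b + 3)
      = ({⟨3 * b, by omega⟩, ⟨3 * b + 1, by omega⟩, ⟨3 * b + 2, by omega⟩}
          : Finset (Fin (3 * m))) := by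
    intro b hb
    ext t
    simp only [Finset.mem_filter, Finset.mem_univ, true_and, Finset.mem_insert,
      Finset.mem_singleton, Fin.ext_iff]
    omega
  have hbpcard : ∀ (b : ℕ) (hb : b < m),
      (Finset.univ.filter (fun t : Fin (3 * m) => 3 * b ≤ (t : ℕ) ∧ (t : ℕ) < 3 * b + 3)).card
      = 3 := by
    intro b hb
    rw [hbp b hb]
    rw [Finset.card_insert_of_notMem (by simp [Fin.ext_iff]),
      Finset.card_insert_of_notMem (by simp [Fin.ext_iff]), Finset.card_singleton]
  have himg : ∀ (b : ℕ) (hb : b < m),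
      (Finset.univ.filter (fun t : Fin (3 * m) => 3 * b ≤ (t : ℕ) ∧ (t : ℕ) < 3 * b + 3)).image f
      = Q ⟨b, hb⟩ := by
    intro b hb
    apply Finset.eq_of_subset_of_card_le
    · intro z hz
      obtain ⟨t, ht, rfl⟩ := Finset.mem_image.mp hz
      simp only [Finset.mem_filter, Finset.mem_univ, true_and] at ht
      have hidxb : (idx t).1 = (⟨b, hb⟩ : Fin m) := by
        apply Fin.ext
        show (t : ℕ) / 3 = b
        omega
      have := hfmem t
      rw [hidxb] at this
      exact this
    · rw [Finset.card_image_of_injective _ hfinj, hbpcard b hb, hQ3]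
  have hfsum : ∀ (b : ℕ) (hb : b < m),
      ∑ t ∈ Finset.univ.filter
        (fun t : Fin (3 * m) => 3 * b ≤ (t : ℕ) ∧ (t : ℕ) < 3 * b + 3), a (π t) = A := by
    intro b hb
    have h1 : ∑ t ∈ Finset.univ.filter
        (fun t : Fin (3 * m) => 3 * b ≤ (t : ℕ) ∧ (t : ℕ) < 3 * b + 3), a (π t)
        = ∑ i ∈ Q ⟨b, hb⟩, a i := by
      rw [← himg b hb, Finset.sum_image (fun u _ u' _ h => hfinj h)]
      exact Finset.sum_congr rfl fun t _ => by rw [hπf]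
    rw [h1, hQA]
  -- signs and directions per block
  have hDS : ∀ b : ℕ, ∃ sd : ℤ × (ℤ × ℤ), (sd.1 = 1 ∨ sd.1 = -1) ∧
      (sd.2 = (1, 0) ∨ sd.2 = (0, 1)) ∧ (sd.1 * A) • sd.2 = p (b + 1) - p b := by
    intro b
    rcases delta_cases A hA p hp b with h | h | h
    · exact ⟨(1, (1, 0)), Or.inl rfl, Or.inl rfl, by rw [h]; simp [Prod.ext_iff]⟩
    · exact ⟨(1, (0, 1)), Or.inl rfl, Or.inr rfl, by rw [h]; simp [Prod.ext_iff]⟩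
    · exact ⟨(-1, (0, 1)), Or.inr rfl, Or.inr rfl, by rw [h]; simp [Prod.ext_iff]⟩
  choose sd hsd1 hsd2 hsd3 using hDS
  -- the signs and orientations
  set ε : Fin (3 * m) → ℤ := fun i => (sd ((i : ℕ) / 3)).1 with hεdef
  set o : Fin (3 * m) → ℤ × ℤ := fun i => (sd ((i : ℕ) / 3)).2 with hodef
  set SS : ℕ → ℤ × ℤ := fun t => ∑ i ∈ Finset.univ.filter
      (fun i : Fin (3 * m) => (i : ℕ) < t), (ε i * a (π i)) • o i with hSS
  have hsplit : ∀ t t' : ℕ, t ≤ t' → SS t' = SS t + ∑ i ∈ Finset.univ.filter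
      (fun i : Fin (3 * m) => t ≤ (i : ℕ) ∧ (i : ℕ) < t'), (ε i * a (π i)) • o i := by
    intro t t' htt
    have hdisj : Disjoint (Finset.univ.filter (fun i : Fin (3 * m) => (i : ℕ) < t))
        (Finset.univ.filter (fun i : Fin (3 * m) => t ≤ (i : ℕ) ∧ (i : ℕ) < t')) := by
      rw [Finset.disjoint_left]
      intro i hi hi'
      simp only [Finset.mem_filter, Finset.mem_univ, true_and] at hi hi'
      omega
    have hset : Finset.univ.filter (fun i : Fin (3 * m) => (i : ℕ) < t')
        = Finset.univ.filter (fun i : Fin (3 * m) => (i : ℕ) < t)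
          ∪ Finset.univ.filter (fun i : Fin (3 * m) => t ≤ (i : ℕ) ∧ (i : ℕ) < t') := by
      ext i
      simp only [Finset.mem_filter, Finset.mem_univ, true_and, Finset.mem_union]
      omega
    rw [hSS]
    simp only
    rw [hset, Finset.sum_union hdisj]
  -- block partial sums
  have hblk : ∀ (b : ℕ) (hb : b < m) (r : ℕ), r ≤ 3 →
      ∃ s : ℤ, 0 ≤ s ∧ s ≤ A ∧ (r = 3 → s = A) ∧
      ∑ i ∈ Finset.univ.filter
        (fun i : Fin (3 * m) => 3 * b ≤ (i : ℕ) ∧ (i : ℕ) < 3 * b + r),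
        (ε i * a (π i)) • o i = ((sd b).1 * s) • (sd b).2 := by
    intro b hb r hr
    refine ⟨∑ i ∈ Finset.univ.filter
        (fun i : Fin (3 * m) => 3 * b ≤ (i : ℕ) ∧ (i : ℕ) < 3 * b + r), a (π i),
      Finset.sum_nonneg fun i _ => (hapos _).le, ?_, ?_, ?_⟩
    · rw [← hfsum b hb]
      apply Finset.sum_le_sum_of_subset_of_nonneg
      · intro i hi
        simp only [Finset.mem_filter, Finset.mem_univ, true_and] at hi ⊢
        omega
      · exact fun i _ _ => (hapos _).le
    · intro hr3
      rw [hr3, hfsum b hb]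
    · have hcongr : ∀ i ∈ Finset.univ.filter
          (fun i : Fin (3 * m) => 3 * b ≤ (i : ℕ) ∧ (i : ℕ) < 3 * b + r),
          (ε i * a (π i)) • o i = ((sd b).1 * a (π i)) • (sd b).2 := by
        intro i hi
        simp only [Finset.mem_filter, Finset.mem_univ, true_and] at hi
        have hdiv : (i : ℕ) / 3 = b := by omega
        rw [hεdef, hodef]
        simp only [hdiv]
      rw [Finset.sum_congr rfl hcongr, ← Finset.sum_smul, ← Finset.mul_sum]
  have hp0 : p 0 = 0 := by
    rw [hp]
    norm_num
  -- nodes hit the corners exactly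
  have hS3 : ∀ b : ℕ, b ≤ m → SS (3 * b) = p b := by
    intro b
    induction b with
    | zero =>
      intro _
      rw [hp0]
      rw [hSS]
      simp only [Nat.mul_zero]
      rw [Finset.filter_false_of_mem (fun i _ => by omega), Finset.sum_empty]
    | succ b ih =>
      intro hb1
      have hb : b < m := by omega
      obtain ⟨s, _, _, hsA, hsum3⟩ := hblk b hb 3 le_rfl
      have h33 : 3 * (b + 1) = 3 * b + 3 := by ring
      rw [h33, hsplit (3 * b) (3 * b + 3) (by omega), ih (by omega), hsum3,
        hsA rfl, hsd3 b, add_sub_cancel]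
  -- membership of intermediate points in the segment
  have hseg : ∀ (b : ℕ), b < m → ∀ s : ℤ, 0 ≤ s → s ≤ A →
      toR (p b + ((sd b).1 * s) • (sd b).2)
        ∈ segment ℝ (toR (p b)) (toR (p (b + 1))) := by
    intro b hb s hs0 hsA
    rw [segment_eq_image']
    refine ⟨(s : ℝ) / (A : ℝ), ⟨div_nonneg (by exact_mod_cast hs0) hA'.le,
      (div_le_one hA').mpr (by exact_mod_cast hsA)⟩, ?_⟩
    have hd : toR (p (b + 1)) - toR (p b) = (((sd b).1 * A : ℤ) : ℝ) • toR ((sd b).2) := by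
      rw [← toR_sub, ← hsd3 b, toR_smul]
    dsimp only
    rw [hd, toR_add, toR_smul, smul_smul]
    have hAne : (A : ℝ) ≠ 0 := hA'.ne'
    congr 1
    push_cast
    field_simp
  -- the intermediate nodes lie on the segment
  have hmid : ∀ (b : ℕ) (hb : b < m) (r : ℕ), r ≤ 3 →
      toR (SS (3 * b + r)) ∈ segment ℝ (toR (p b)) (toR (p (b + 1))) := by
    intro b hb r hr
    obtain ⟨s, hs0, hsA, _, hsum⟩ := hblk b hb r hr
    rw [hsplit (3 * b) (3 * b + r) (by omega), hS3 b (by omega), hsum]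
    exact hseg b hb s hs0 hsA
  refine ⟨0, π, ε, o, fun j => 3 * (j : ℕ), fun t => toR (SS t),
    fun i => hsd1 _, fun i => hsd2 _, ?_, ?_, ?_, ?_, ?_, ?_⟩
  · intro t
    rw [zero_add]
  · intro j j' hjj
    have := Fin.le_def.mp hjj
    simp only
    omega
  · simp
  · simp [Fin.val_last]
  · intro j
    have hjm : (j : ℕ) ≤ m := by have := j.2; omega
    simp only
    rw [hS3 (j : ℕ) hjm, sub_self, norm_zero]
    exact hδ0
  · intro i hi1 hi2 y hy
    obtain ⟨b, r, hbdef, hrdef, hi'⟩ : ∃ b r, b = (i - 1) / 3 ∧ r = (i - 1) % 3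
        ∧ i - 1 = 3 * b + r := ⟨_, _, rfl, rfl, by omega⟩
    have hblt : b < m := by omega
    have h1 : toR (SS (i - 1)) ∈ segment ℝ (toR (p b)) (toR (p (b + 1))) := by
      rw [hi']
      exact hmid b hblt r (by omega)
    have h2 : toR (SS i) ∈ segment ℝ (toR (p b)) (toR (p (b + 1))) := by
      rw [show i = 3 * b + (r + 1) by omega]
      exact hmid b hblt (r + 1) (by omega)
    have hsub := (convex_segment (toR (p b)) (toR (p (b + 1)))).segment_subset h1 h2
    refine ⟨y, ?_, by simp [hδ0]⟩
    rw [hF]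
    refine Set.mem_iUnion₂.mpr ⟨b + 1, Finset.mem_Icc.mpr ⟨by omega, by omega⟩, ?_⟩
    simp only [Nat.add_sub_cancel]
    exact hsub hy




/-- Corridor variant of the DPA-S hardness reduction (Corollary 1): an
axis-aligned path using each strut length `a i` exactly once, whose nodes
`X (k j)` lie in the `δ`-boxes (`δ < 1/2`, `ℓ∞`-norm) of the turning points
`p j = (⌊j/2⌋·A, (⌈j/2⌉ mod 2)·A)` of the zigzag polyline `F` and all of
whose segments stay within `ℓ∞`-distance `δ` of `F`, exists iff `Fin (3m)`
can be partitioned into `m` three-element sets each with `a`-sum `A`.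
(Steps are indexed 0-based: `X t` is the node after the first `t` steps.) -/
theorem stmt_7 (m : ℕ) (hm : 0 < m) (A : ℤ) (hA : 0 < A)
    (a : Fin (3 * m) → ℤ)
    (h4 : ∀ i, 4 * a i > A) (h2 : ∀ i, 2 * a i < A)
    (hsum : ∑ i, a i = (m : ℤ) * A)
    (δ : ℝ) (hδ0 : 0 ≤ δ) (hδ : δ < 1 / 2)
    (p : ℕ → ℤ × ℤ)
    (hp : ∀ j, p j = (((j / 2 : ℕ) : ℤ) * A, (((j + 1) / 2 % 2 : ℕ) : ℤ) * A))
    (F : Set (ℝ × ℝ))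
    (hF : F = ⋃ j ∈ Finset.Icc 1 m, segment ℝ (toR (p (j - 1))) (toR (p j))) :
    (∃ (x : ℝ × ℝ) (π : Equiv.Perm (Fin (3 * m))) (ε : Fin (3 * m) → ℤ)
        (o : Fin (3 * m) → ℤ × ℤ) (k : Fin (m + 1) → ℕ) (X : ℕ → ℝ × ℝ),
      (∀ i, ε i = 1 ∨ ε i = -1) ∧
      (∀ i, o i = (1, 0) ∨ o i = (0, 1)) ∧
      (∀ t : ℕ, X t = x + toR (∑ i ∈ Finset.univ.filter
          (fun i : Fin (3 * m) => (i : ℕ) < t), (ε i * a (π i)) • o i)) ∧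
      Monotone k ∧ k 0 = 0 ∧ k (Fin.last m) = 3 * m ∧
      (∀ j : Fin (m + 1), ‖X (k j) - toR (p (j : ℕ))‖ ≤ δ) ∧
      (∀ i : ℕ, 1 ≤ i → i ≤ 3 * m →
        ∀ y ∈ segment ℝ (X (i - 1)) (X i), ∃ z ∈ F, ‖y - z‖ ≤ δ)) ↔
    (∃ P : Finpartition (Finset.univ : Finset (Fin (3 * m))),
      P.parts.card = m ∧ ∀ q ∈ P.parts, q.card = 3 ∧ ∑ i ∈ q, a i = A) := by
  constructor
  · rintro ⟨x, π, ε, o, k, X, hε, ho, hX, hkmono, hk0, hklast, hnode, hcorr⟩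
    exact forward_dir m hm A hA a h4 h2 δ hδ0 hδ p hp x π ε o k X hε ho hX hkmono hk0 hklast hnode
  · rintro ⟨P, hPc, hP⟩
    exact backward_dir m hm A hA a h4 h2 δ hδ0 hδ p hp F hF P hPc hP
end

section
/- Let m, A be positive integers and a : {1,…,3m} → ℤ with 4·a(i) > A and 2·a(i) < A for all i and ∑_{i=1}^{3m} a(i) = m·A. Let δ be a real number with 0 ≤ δ < 1/2 and set p_j := (⌊j/2⌋·A, (⌈j/2⌉ mod 2)·A) for j = 0,…,m. The following are equivalent: (i) there exist a permutation π of {1,…,3m}, signs ε(i) ∈ {−1,1}, orientations o(i) ∈ {e₁, e₂}, and indices 0 = k₀ ≤ k₁ ≤ ⋯ ≤ k_m = 3m such that, with steps v(i) := ε(i)·a(π(i))·o(i) and nodes x_i := p₀ + ∑_{1 ≤ l ≤ i} v(l), one has x_{3m} = p_m (exact endpoints) and ‖x_{k_j} − p_j‖_∞ ≤ δ for every j ∈ {1,…,m−1}; (ii) {1,…,3m} can be partitioned into m three-element sets each with a-sum A. -/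
lemma toR_add_s9 (x y : ℤ × ℤ) : toR (x + y) = toR x + toR y := by
  simp [toR, Prod.ext_iff]

lemma toR_inj : Function.Injective toR := by
  intro x y h
  simp [toR, Prod.ext_iff] at h
  exact Prod.ext (by exact_mod_cast h.1) (by exact_mod_cast h.2)

lemma toR_small {q : ℤ × ℤ} (h : ‖toR q‖ < 1) : q = 0 := by
  rw [Prod.norm_def] at h
  simp only [toR] at h
  have h1 : |(q.1 : ℝ)| < 1 := lt_of_le_of_lt (le_max_left _ _) h
  have h2 : |(q.2 : ℝ)| < 1 := lt_of_le_of_lt (le_max_right _ _) h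
  rw [← Int.cast_abs] at h1 h2
  have : |q.1| < 1 := by exact_mod_cast h1
  have : |q.2| < 1 := by exact_mod_cast h2
  have := abs_lt.mp ‹|q.1| < 1›
  have := abs_lt.mp ‹|q.2| < 1›
  refine Prod.ext ?_ ?_ <;> simp <;> omega

lemma sum_filter_split {M : Type*} [AddCommMonoid M] {n : ℕ} (g : Fin n → M) (s t : ℕ) (hst : s ≤ t) :
    ∑ i ∈ Finset.univ.filter (fun i : Fin n => (i : ℕ) < t), g i
      = ∑ i ∈ Finset.univ.filter (fun i : Fin n => (i : ℕ) < s), g i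
        + ∑ i ∈ Finset.univ.filter (fun i : Fin n => s ≤ (i : ℕ) ∧ (i : ℕ) < t), g i := by
  rw [← Finset.sum_union (by simp [Finset.disjoint_left]; omega)]
  apply Finset.sum_congr _ (fun _ _ => rfl)
  ext i
  simp only [Finset.mem_union, Finset.mem_filter, Finset.mem_univ, true_and]
  omega

lemma pdiff (A : ℤ) (p : ℕ → ℤ × ℤ)
    (hp : ∀ j, p j = (((j / 2 : ℕ) : ℤ) * A, (((j + 1) / 2 % 2 : ℕ) : ℤ) * A)) (j : ℕ) :
    (j % 2 = 1 → p (j + 1) - p j = (A, 0)) ∧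
    (j % 4 = 0 → p (j + 1) - p j = (0, A)) ∧
    (j % 4 = 2 → p (j + 1) - p j = (0, -A)) := by
  rw [hp, hp]
  refine ⟨fun h => ?_, fun h => ?_, fun h => ?_⟩
  · have h1 : (j + 1) / 2 = j / 2 + 1 := by omega
    have h2 : (j + 1 + 1) / 2 % 2 = (j / 2 + 1) % 2 := by omega
    rw [Prod.mk_sub_mk, Prod.mk.injEq, h1, h2]
    push_cast
    constructor <;> ring
  · have h1 : (j + 1) / 2 = j / 2 := by omega
    have h2 : (j + 1 + 1) / 2 % 2 = 1 := by omega
    rw [Prod.mk_sub_mk, Prod.mk.injEq, h1, h2]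
    have h3 : j / 2 % 2 = 0 := by omega
    rw [h3]
    push_cast
    constructor <;> ring
  · have h1 : (j + 1) / 2 = j / 2 := by omega
    have h2 : (j + 1 + 1) / 2 % 2 = 0 := by omega
    rw [Prod.mk_sub_mk, Prod.mk.injEq, h1, h2]
    have h3 : j / 2 % 2 = 1 := by omega
    rw [h3]
    push_cast
    constructor <;> ring

lemma card_ge_three {n : ℕ} (A : ℤ) (hA : 0 < A) (b : Fin n → ℤ) (hb : ∀ i, 2 * |b i| < A)
    (T : Finset (Fin n)) (hT : |∑ i ∈ T, b i| = A) : 3 ≤ T.card := by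
  by_contra h
  push_neg at h
  rcases T.eq_empty_or_nonempty with rfl | hne
  · simp at hT; omega
  · have h1 : |∑ i ∈ T, b i| ≤ ∑ i ∈ T, |b i| := Finset.abs_sum_le_sum_abs _ _
    have h2 : ∑ i ∈ T, 2 * |b i| < ∑ _i ∈ T, A :=
      Finset.sum_lt_sum_of_nonempty hne (fun i _ => hb i)
    rw [Finset.sum_const, ← Finset.mul_sum, nsmul_eq_mul] at h2
    have h3 : (T.card : ℤ) ≤ 2 := by exact_mod_cast Nat.le_of_lt_succ h
    nlinarith

lemma sum_three {n : ℕ} (A : ℤ) (hA : 0 < A) (c g : Fin n → ℤ)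
    (hg4 : ∀ i, A < 4 * g i) (hg2 : ∀ i, 2 * g i < A) (hc : ∀ i, c i = g i ∨ c i = - g i)
    (T : Finset (Fin n)) (hcard : T.card = 3) (hsum : ∑ i ∈ T, c i = A) :
    ∑ i ∈ T, g i = A := by
  have hgpos : ∀ i, 1 ≤ g i := fun i => by have := hg4 i; omega
  suffices h : ∀ i ∈ T, c i = g i by
    rw [← hsum]; exact (Finset.sum_congr rfl h).symm
  by_contra h
  push_neg at h
  obtain ⟨i0, hi0T, hi0⟩ := h
  have hci0 : c i0 = - g i0 := (hc i0).resolve_left hi0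
  have hErase : (T.erase i0).card = 2 := by rw [Finset.card_erase_of_mem hi0T, hcard]
  have h1 : ∑ i ∈ T.erase i0, c i ≤ ∑ i ∈ T.erase i0, g i :=
    Finset.sum_le_sum (fun i _ => by rcases hc i with h' | h' <;> [omega; (have := hgpos i; omega)])
  have h2 : ∑ i ∈ T.erase i0, (2 * g i) ≤ ∑ _i ∈ T.erase i0, (A - 1) :=
    Finset.sum_le_sum (fun i _ => by have := hg2 i; omega)
  rw [Finset.sum_const, ← Finset.mul_sum, hErase, nsmul_eq_mul] at h2
  have hsplit : ∑ i ∈ T, c i = c i0 + ∑ i ∈ T.erase i0, c i := (Finset.add_sum_erase T c hi0T).symm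
  have := hgpos i0
  push_cast at h2
  omega

lemma seg_lemma {n : ℕ} (A : ℤ) (hA : 0 < A) (b g : Fin n → ℤ)
    (hg4 : ∀ i, A < 4 * g i) (hg2 : ∀ i, 2 * g i < A) (hb : ∀ i, b i = g i ∨ b i = - g i)
    (o : Fin n → ℤ × ℤ) (ho : ∀ i, o i = (1, 0) ∨ o i = (0, 1))
    (T : Finset (Fin n))
    (hD : ∑ i ∈ T, (b i) • o i = ((A : ℤ), (0 : ℤ)) ∨ ∑ i ∈ T, (b i) • o i = ((0 : ℤ), A) ∨
      ∑ i ∈ T, (b i) • o i = ((0 : ℤ), -A)) :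
    3 ≤ T.card ∧ (T.card = 3 → ∑ i ∈ T, g i = A) := by
  have hbabs : ∀ i, 2 * |b i| < A := by
    intro i
    have h1 := hg4 i; have h2 := hg2 i
    rcases hb i with h | h <;> rw [h] <;> [skip; rw [abs_neg]] <;> rw [abs_of_pos (by omega)] <;> omega
  have hfst : (∑ i ∈ T, (b i) • o i).1 = ∑ i ∈ T.filter (fun i => o i = ((1 : ℤ), (0 : ℤ))), b i := by
    rw [Prod.fst_sum, Finset.sum_filter]
    refine Finset.sum_congr rfl (fun i _ => ?_)
    rcases ho i with h | h <;> simp [h]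
  have hsnd : (∑ i ∈ T, (b i) • o i).2 = ∑ i ∈ T.filter (fun i => o i = ((0 : ℤ), (1 : ℤ))), b i := by
    rw [Prod.snd_sum, Finset.sum_filter]
    refine Finset.sum_congr rfl (fun i _ => ?_)
    rcases ho i with h | h <;> simp [h, Prod.ext_iff]
  set T1 := T.filter (fun i => o i = ((1 : ℤ), (0 : ℤ))) with hT1
  set T2 := T.filter (fun i => o i = ((0 : ℤ), (1 : ℤ))) with hT2
  have hsub1 : T1 ⊆ T := Finset.filter_subset _ _
  have hsub2 : T2 ⊆ T := Finset.filter_subset _ _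
  -- the relevant filtered set has card ≥ 3 in each case
  have key : ∃ U : Finset (Fin n), U ⊆ T ∧ 3 ≤ U.card ∧
      ((∑ i ∈ U, b i = A) ∨ (∑ i ∈ U, b i = -A)) := by
    rcases hD with h | h | h
    · refine ⟨T1, hsub1, ?_, Or.inl ?_⟩
      · exact card_ge_three A hA b hbabs T1 (by rw [← hfst, h]; simp [abs_of_pos hA])
      · rw [← hfst, h]
    · refine ⟨T2, hsub2, ?_, Or.inl ?_⟩
      · exact card_ge_three A hA b hbabs T2 (by rw [← hsnd, h]; simp [abs_of_pos hA])
      · rw [← hsnd, h]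
    · refine ⟨T2, hsub2, ?_, Or.inr ?_⟩
      · exact card_ge_three A hA b hbabs T2 (by rw [← hsnd, h]; simp [abs_of_pos hA])
      · rw [← hsnd, h]
  obtain ⟨U, hUT, hU3, hUsum⟩ := key
  have hcard : 3 ≤ T.card := le_trans hU3 (Finset.card_le_card hUT)
  refine ⟨hcard, fun h3 => ?_⟩
  have hUeq : U = T := Finset.eq_of_subset_of_card_le hUT (by omega)
  subst hUeq
  rcases hUsum with h | h
  · exact sum_three A hA b g hg4 hg2 hb U h3 h
  · refine sum_three A hA (fun i => - b i) g hg4 hg2 (fun i => ?_) U h3 ?_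
    · rcases hb i with h' | h' <;> omega
    · rw [Finset.sum_neg_distrib]; omega

lemma toR_sub_s9 (x y : ℤ × ℤ) : toR (x - y) = toR x - toR y := by
  simp [toR, Prod.ext_iff]

/-- Exact-endpoint variant of the DPA-S hardness reduction: an axis-aligned
path using each strut length `a i` exactly once, starting exactly at `p 0`,
ending exactly at `p m`, and whose intermediate nodes `X (k j)` lie in the
`δ`-boxes (`δ < 1/2`, `ℓ∞`-norm) of the turning points
`p j = (⌊j/2⌋·A, (⌈j/2⌉ mod 2)·A)` for `j = 1, …, m−1`, exists iff
`Fin (3m)` can be partitioned into `m` three-element sets each with `a`-sum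
`A`. (Steps are indexed 0-based: `X t` is the node after the first `t` steps.) -/
theorem stmt_9 (m : ℕ) (hm : 0 < m) (A : ℤ) (hA : 0 < A)
    (a : Fin (3 * m) → ℤ)
    (h4 : ∀ i, 4 * a i > A) (h2 : ∀ i, 2 * a i < A)
    (hsum : ∑ i, a i = (m : ℤ) * A)
    (δ : ℝ) (hδ0 : 0 ≤ δ) (hδ : δ < 1 / 2)
    (p : ℕ → ℤ × ℤ)
    (hp : ∀ j, p j = (((j / 2 : ℕ) : ℤ) * A, (((j + 1) / 2 % 2 : ℕ) : ℤ) * A)) :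
    (∃ (π : Equiv.Perm (Fin (3 * m))) (ε : Fin (3 * m) → ℤ)
        (o : Fin (3 * m) → ℤ × ℤ) (k : Fin (m + 1) → ℕ) (X : ℕ → ℝ × ℝ),
      (∀ i, ε i = 1 ∨ ε i = -1) ∧
      (∀ i, o i = (1, 0) ∨ o i = (0, 1)) ∧
      (∀ t : ℕ, X t = toR (p 0) + toR (∑ i ∈ Finset.univ.filter
          (fun i : Fin (3 * m) => (i : ℕ) < t), (ε i * a (π i)) • o i)) ∧
      Monotone k ∧ k 0 = 0 ∧ k (Fin.last m) = 3 * m ∧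
      X (3 * m) = toR (p m) ∧
      (∀ j : Fin (m + 1), (j : ℕ) ≠ 0 → (j : ℕ) ≠ m →
        ‖X (k j) - toR (p (j : ℕ))‖ ≤ δ)) ↔
    (∃ P : Finpartition (Finset.univ : Finset (Fin (3 * m))),
      P.parts.card = m ∧ ∀ q ∈ P.parts, q.card = 3 ∧ ∑ i ∈ q, a i = A) := by
  constructor
  · rintro ⟨π, ε, o, k, X, hε, ho, hX, hkmono, hk0, hklast, hXend, hXnear⟩
    have hp0 : p 0 = 0 := by
      rw [hp]
      norm_num
    set step : Fin (3 * m) → ℤ × ℤ := fun i => (ε i * a (π i)) • o i with hstepdef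
    have hXt : ∀ t, X t = toR (∑ i ∈ Finset.univ.filter
        (fun i : Fin (3 * m) => (i : ℕ) < t), step i) := by
      intro t
      rw [hX t, hp0, toR_zero, zero_add]
    -- the partial sums hit the turning points exactly
    have hSk : ∀ j : Fin (m + 1), ∑ i ∈ Finset.univ.filter
        (fun i : Fin (3 * m) => (i : ℕ) < k j), step i = p (j : ℕ) := by
      intro j
      by_cases hj0 : (j : ℕ) = 0
      · have hj : j = 0 := Fin.ext (by simpa using hj0)
        subst hj
        rw [hk0]
        have hempty : Finset.univ.filter (fun i : Fin (3 * m) => (i : ℕ) < 0) = ∅ := by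
          ext i; simp
        rw [hempty, Finset.sum_empty]
        simp only [Fin.val_zero]
        rw [hp0]
      · by_cases hjm : (j : ℕ) = m
        · have hj : j = Fin.last m := Fin.ext (by simpa using hjm)
          subst hj
          rw [hklast, Fin.val_last]
          apply toR_inj
          rw [← hXt (3 * m), hXend]
        · have hnear := hXnear j hj0 hjm
          rw [hXt (k j), ← toR_sub_s9] at hnear
          have hsmall := toR_small (lt_of_le_of_lt hnear (by linarith))
          exact sub_eq_zero.mp hsmall
    have hkm : ∀ (u v : Fin (m + 1)), (u : ℕ) ≤ (v : ℕ) → k u ≤ k v :=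
      fun u v h => hkmono (Fin.le_def.mpr h)
    set T : Fin m → Finset (Fin (3 * m)) := fun j =>
      Finset.univ.filter (fun i : Fin (3 * m) =>
        k j.castSucc ≤ (i : ℕ) ∧ (i : ℕ) < k j.succ) with hTdef
    have hTsum : ∀ j : Fin m, ∑ i ∈ T j, step i = p ((j : ℕ) + 1) - p (j : ℕ) := by
      intro j
      have hmono : k j.castSucc ≤ k j.succ := hkm _ _ (by simp)
      have hsplit := sum_filter_split step (k j.castSucc) (k j.succ) hmono
      rw [hSk j.castSucc, hSk j.succ, Fin.val_succ, Fin.coe_castSucc] at hsplit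
      rw [eq_sub_iff_add_eq, add_comm]
      exact hsplit.symm
    have hseg : ∀ j : Fin m, 3 ≤ (T j).card ∧ ((T j).card = 3 → ∑ i ∈ T j, a (π i) = A) := by
      intro j
      have hb : ∀ i, ε i * a (π i) = a (π i) ∨ ε i * a (π i) = - a (π i) := by
        intro i
        rcases hε i with h | h <;> rw [h] <;> [left; right] <;> ring
      have hpd := pdiff A p hp (j : ℕ)
      refine seg_lemma A hA (fun i => ε i * a (π i)) (fun i => a (π i))
        (fun i => h4 (π i)) (fun i => h2 (π i)) hb o ho (T j) ?_
      have hstep' : ∑ i ∈ T j, (ε i * a (π i)) • o i = p ((j : ℕ) + 1) - p (j : ℕ) := hTsum j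
      rcases (by omega : (j : ℕ) % 2 = 1 ∨ (j : ℕ) % 4 = 0 ∨ (j : ℕ) % 4 = 2) with h | h | h
      · left; rw [hstep', hpd.1 h]
      · right; left; rw [hstep', hpd.2.1 h]
      · right; right; rw [hstep', hpd.2.2 h]
    have hdisj : ∀ j j' : Fin m, j ≠ j' → Disjoint (T j) (T j') := by
      intro j j' hne
      rw [Finset.disjoint_left]
      intro i hi hi'
      rw [hTdef] at hi hi'
      simp only [Finset.mem_filter, Finset.mem_univ, true_and] at hi hi'
      rcases Nat.lt_or_ge (j : ℕ) (j' : ℕ) with h | h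
      · have := hkm j.succ j'.castSucc (by simp; omega)
        omega
      · have hlt : (j' : ℕ) < (j : ℕ) := by
          rcases Nat.lt_or_ge (j' : ℕ) (j : ℕ) with h' | h'
          · exact h'
          · exact absurd (Fin.ext (le_antisymm h' h)) hne
        have := hkm j'.succ j.castSucc (by simp; omega)
        omega
    have hcover : ∀ i : Fin (3 * m), ∃ j : Fin m, i ∈ T j := by
      intro i
      have hi : (i : ℕ) < k (Fin.last m) := by rw [hklast]; exact i.isLt
      have hne : (Finset.univ.filter (fun j : Fin (m + 1) => (i : ℕ) < k j)).Nonempty :=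
        ⟨Fin.last m, by simp [hi]⟩
      set jm := (Finset.univ.filter (fun j : Fin (m + 1) => (i : ℕ) < k j)).min' hne with hjmdef
      have hjmmem := Finset.min'_mem _ hne
      have hjmlt : (i : ℕ) < k jm := (Finset.mem_filter.mp hjmmem).2
      have hjm0 : (jm : ℕ) ≠ 0 := by
        intro h0
        have : jm = 0 := Fin.ext (by simpa using h0)
        rw [this, hk0] at hjmlt
        omega
      have hjmle : (jm : ℕ) ≤ m := by have := jm.isLt; omega
      refine ⟨⟨(jm : ℕ) - 1, by omega⟩, ?_⟩
      rw [hTdef]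
      simp only [Finset.mem_filter, Finset.mem_univ, true_and]
      constructor
      · by_contra hlt
        push_neg at hlt
        have hmem : (⟨(jm : ℕ) - 1, by omega⟩ : Fin m).castSucc ∈
            Finset.univ.filter (fun j : Fin (m + 1) => (i : ℕ) < k j) := by
          simp only [Finset.mem_filter, Finset.mem_univ, true_and]
          exact hlt
        have h5 : jm ≤ (⟨(jm : ℕ) - 1, by omega⟩ : Fin m).castSucc :=
          Finset.min'_le _ _ hmem
        rw [Fin.le_def] at h5
        simp only [Fin.coe_castSucc] at h5
        omega
      · have heq : (⟨(jm : ℕ) - 1, by omega⟩ : Fin m).succ = jm := Fin.ext (by simp; omega)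
        rw [heq]
        exact hjmlt
    have hcardsum : ∑ j : Fin m, (T j).card = 3 * m := by
      have hbU : Finset.univ.biUnion T = (Finset.univ : Finset (Fin (3 * m))) := by
        ext i
        simp only [Finset.mem_biUnion, Finset.mem_univ, true_and, iff_true]
        exact hcover i
      have : (Finset.univ.biUnion T).card = ∑ j : Fin m, (T j).card :=
        Finset.card_biUnion (fun j _ j' _ hne => hdisj j j' hne)
      rw [hbU, Finset.card_univ, Fintype.card_fin] at this
      omega
    have hcard3 : ∀ j : Fin m, (T j).card = 3 := by
      by_contra hcon
      push_neg at hcon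
      obtain ⟨j0, hj0⟩ := hcon
      have hlt : ∑ _j : Fin m, 3 < ∑ j : Fin m, (T j).card :=
        Finset.sum_lt_sum (fun j _ => (hseg j).1)
          ⟨j0, Finset.mem_univ _, by have := (hseg j0).1; omega⟩
      rw [Finset.sum_const, Finset.card_univ, Fintype.card_fin, smul_eq_mul] at hlt
      omega
    have hsumA : ∀ j : Fin m, ∑ i ∈ T j, a (π i) = A := fun j => (hseg j).2 (hcard3 j)
    -- build the partition
    set q : Fin m → Finset (Fin (3 * m)) := fun j => (T j).image π with hqdef
    have hqcard : ∀ j, (q j).card = 3 := fun j => by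
      rw [hqdef]
      rw [Finset.card_image_of_injective _ π.injective, hcard3]
    have hqdisj : ∀ j j' : Fin m, j ≠ j' → Disjoint (q j) (q j') := fun j j' hne =>
      (Finset.disjoint_image π.injective).mpr (hdisj j j' hne)
    have hqinj : Function.Injective q := by
      intro j j' h
      by_contra hne
      have hd := hqdisj j j' hne
      rw [h, disjoint_self] at hd
      have := hqcard j'
      rw [hd] at this
      simp at this
    refine ⟨⟨Finset.univ.image q, ?_, ?_, ?_⟩, ?_, ?_⟩
    · rw [Finset.supIndep_iff_pairwiseDisjoint]
      intro x hx y hy hxy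
      simp only [Finset.coe_image, Set.mem_image, Finset.coe_univ, Set.image_univ,
        Set.mem_range] at hx hy
      obtain ⟨j, rfl⟩ := hx
      obtain ⟨j', rfl⟩ := hy
      exact hqdisj j j' (fun h => hxy (by rw [h]))
    · apply Finset.Subset.antisymm
      · intro x _; exact Finset.mem_univ x
      · intro x _
        obtain ⟨j, hj⟩ := hcover (π.symm x)
        have hx : x ∈ q j := by
          rw [hqdef]
          refine Finset.mem_image.mpr ⟨π.symm x, hj, by simp⟩
        exact Finset.mem_sup.mpr ⟨q j, Finset.mem_image_of_mem q (Finset.mem_univ j), hx⟩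
    · intro hbot
      rw [Finset.bot_eq_empty, Finset.mem_image] at hbot
      obtain ⟨j, _, hj⟩ := hbot
      have := hqcard j
      rw [hj] at this
      simp at this
    · rw [Finset.card_image_of_injective _ hqinj, Finset.card_univ, Fintype.card_fin]
    · intro s hs
      rw [Finset.mem_image] at hs
      obtain ⟨j, _, rfl⟩ := hs
      refine ⟨hqcard j, ?_⟩
      rw [hqdef]
      rw [Finset.sum_image (fun x _ y _ h => π.injective h)]
      exact hsumA j
  · rintro ⟨P, hPcard, hparts⟩
    have hp0 : p 0 = 0 := by rw [hp]; norm_num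
    set e := Finset.equivFinOfCardEq hPcard with hedef
    set part : Fin m → Finset (Fin (3 * m)) := fun j => ((e.symm j : P.parts) : Finset (Fin (3 * m))) with hpartdef
    have hpart_mem : ∀ j, part j ∈ P.parts := fun j => (e.symm j).2
    have hpart_card : ∀ j, (part j).card = 3 := fun j => (hparts _ (hpart_mem j)).1
    have hpart_sum : ∀ j, ∑ i ∈ part j, a i = A := fun j => (hparts _ (hpart_mem j)).2
    have hpart_inj : Function.Injective part := fun j j' h =>
      e.symm.injective (Subtype.ext h)
    have hpart_disj : ∀ j j', j ≠ j' → Disjoint (part j) (part j') := fun j j' hne =>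
      P.disjoint (hpart_mem j) (hpart_mem j') (fun h => hne (hpart_inj h))
    set epart : (j : Fin m) → (Fin 3 ≃ {x // x ∈ part j}) :=
      fun j => (Finset.equivFinOfCardEq (hpart_card j)).symm with hepartdef
    set J : Fin (3 * m) → Fin m := fun i => ⟨(i : ℕ) / 3, by have := i.isLt; omega⟩ with hJdef
    set R : Fin (3 * m) → Fin 3 := fun i => ⟨(i : ℕ) % 3, by omega⟩ with hRdef
    set g : Fin (3 * m) → Fin (3 * m) := fun i => ((epart (J i)) (R i) : {x // x ∈ part (J i)}).val with hgdef
    have hg_mem : ∀ i, g i ∈ part (J i) := fun i => ((epart (J i)) (R i)).2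
    have hg_inj : Function.Injective g := by
      intro i i' h
      have hJeq : J i = J i' := by
        by_contra hne
        have hd := hpart_disj _ _ hne
        have h1 := hg_mem i
        have h2 := hg_mem i'
        rw [← h] at h2
        exact Finset.disjoint_left.mp hd h1 h2
      simp only [hgdef] at h
      rw [← hJeq] at h
      have hR : R i = R i' := (epart (J i)).injective (Subtype.ext h)
      have hJ' : (i : ℕ) / 3 = (i' : ℕ) / 3 := by
        have := congrArg Fin.val hJeq
        simpa [hJdef] using this
      have hR' : (i : ℕ) % 3 = (i' : ℕ) % 3 := by
        have := congrArg Fin.val hR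
        simpa [hRdef] using this
      exact Fin.ext (by omega)
    set π : Equiv.Perm (Fin (3 * m)) := Equiv.ofBijective g (Finite.injective_iff_bijective.mp hg_inj) with hπdef
    have hπ : ∀ i, π i = g i := fun i => rfl
    set ε : Fin (3 * m) → ℤ := fun i => if (i : ℕ) / 3 % 4 = 2 then -1 else 1 with hεdef
    set o : Fin (3 * m) → ℤ × ℤ := fun i => if (i : ℕ) / 3 % 2 = 0 then ((0 : ℤ), (1 : ℤ)) else (1, 0) with hodef
    set step : Fin (3 * m) → ℤ × ℤ := fun i => (ε i * a (π i)) • o i with hstepdef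
    set B : ℕ → Finset (Fin (3 * m)) := fun j =>
      Finset.univ.filter (fun i : Fin (3 * m) => 3 * j ≤ (i : ℕ) ∧ (i : ℕ) < 3 * j + 3) with hBdef
    have hBcard : ∀ j : ℕ, j < m → (B j).card = 3 := by
      intro j hj
      have hb : B j = {(⟨3 * j, by omega⟩ : Fin (3 * m)), ⟨3 * j + 1, by omega⟩, ⟨3 * j + 2, by omega⟩} := by
        ext i
        simp only [hBdef, Finset.mem_filter, Finset.mem_univ, true_and, Finset.mem_insert,
          Finset.mem_singleton, Fin.ext_iff]
        omega
      rw [hb]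
      rw [Finset.card_insert_of_notMem (by simp [Fin.ext_iff]), Finset.card_insert_of_notMem (by simp [Fin.ext_iff]),
        Finset.card_singleton]
    have hBimg : ∀ j : Fin m, (B (j : ℕ)).image g = part j := by
      intro j
      have hsub : (B (j : ℕ)).image g ⊆ part j := by
        intro x hx
        obtain ⟨i, hi, rfl⟩ := Finset.mem_image.mp hx
        simp only [hBdef, Finset.mem_filter, Finset.mem_univ, true_and] at hi
        have hJi : J i = j := Fin.ext (by simp only [hJdef]; omega)
        have := hg_mem i
        rwa [hJi] at this
      refine Finset.eq_of_subset_of_card_le hsub ?_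
      rw [Finset.card_image_of_injective _ hg_inj, hBcard _ j.isLt, hpart_card]
    have hBsum : ∀ j : Fin m, ∑ i ∈ B (j : ℕ), a (g i) = A := by
      intro j
      rw [← Finset.sum_image (fun x _ y _ h => hg_inj h), hBimg j, hpart_sum j]
    have hblock : ∀ j : ℕ, j < m → ∑ i ∈ B j, step i = p (j + 1) - p j := by
      intro j hj
      have hεc : ∀ i ∈ B j, step i = ((if j % 4 = 2 then (-1 : ℤ) else 1) * a (g i)) •
          (if j % 2 = 0 then ((0 : ℤ), (1 : ℤ)) else (1, 0)) := by
        intro i hi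
        simp only [hBdef, Finset.mem_filter, Finset.mem_univ, true_and] at hi
        have hdiv : (i : ℕ) / 3 = j := by omega
        simp only [hstepdef, hεdef, hodef, hπ, hdiv]
      rw [Finset.sum_congr rfl hεc, ← Finset.sum_smul, ← Finset.mul_sum,
        hBsum ⟨j, hj⟩]
      have hpd := pdiff A p hp j
      rcases (by omega : j % 2 = 1 ∨ j % 4 = 0 ∨ j % 4 = 2) with h | h | h
      · rw [hpd.1 h, if_neg (by omega), if_neg (by omega)]
        simp [Prod.ext_iff]
      · rw [hpd.2.1 h, if_neg (by omega), if_pos (by omega)]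
        simp [Prod.ext_iff]
      · rw [hpd.2.2 h, if_pos h, if_pos (by omega)]
        simp [Prod.ext_iff]
    have hmain : ∀ j : ℕ, j ≤ m → ∑ i ∈ Finset.univ.filter
        (fun i : Fin (3 * m) => (i : ℕ) < 3 * j), step i = p j := by
      intro j
      induction j with
      | zero =>
        intro _
        have hempty : Finset.univ.filter (fun i : Fin (3 * m) => (i : ℕ) < 3 * 0) = ∅ := by
          ext i; simp
        rw [hempty, Finset.sum_empty, hp0]
      | succ j ih =>
        intro hj
        rw [sum_filter_split step (3 * j) (3 * (j + 1)) (by omega), ih (by omega)]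
        have hBeq : Finset.univ.filter
            (fun i : Fin (3 * m) => 3 * j ≤ (i : ℕ) ∧ (i : ℕ) < 3 * (j + 1)) = B j := by
          simp only [hBdef]
          ext i
          simp only [Finset.mem_filter, Finset.mem_univ, true_and]
          omega
        rw [hBeq, hblock j (by omega), add_comm, sub_add_cancel]
    refine ⟨π, ε, o, fun j => 3 * (j : ℕ), fun t => toR (p 0) + toR (∑ i ∈ Finset.univ.filter
        (fun i : Fin (3 * m) => (i : ℕ) < t), (ε i * a (π i)) • o i), ?_, ?_, fun t => rfl, ?_, ?_, ?_, ?_, ?_⟩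
    · intro i
      simp only [hεdef]
      split <;> simp
    · intro i
      simp only [hodef]
      split <;> simp
    · intro u v huv
      simp only []
      have := Fin.le_def.mp huv
      omega
    · simp
    · simp [Fin.val_last]
    · simp only []
      rw [hp0, toR_zero, zero_add]
      have := hmain m le_rfl
      rw [this]
    · intro j hj0 hjm
      simp only []
      rw [hp0, toR_zero, zero_add]
      have hjle : (j : ℕ) ≤ m := by have := j.isLt; omega
      rw [hmain (j : ℕ) hjle]
      simp [hδ0]
end
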